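/- arXiv:2408.03711 — 9 statements merged into one kernel-verified Lean document; each statement's English description precedes it below -/
import Mathlib

section
/- Let m ≥ 0 be an integer, let φ : 𝔻 → 𝔻 be holomorphic, let c : 𝔻² → ℂ be holomorphic, and let f : 𝔻² → ℂ be holomorphic with (∂₁^i f)(z, z) = 0 for all z ∈ 𝔻 and all integers 0 ≤ i ≤ m. Then the holomorphic function g : 𝔻² → ℂ defined by g(z₁, z₂) = c(z₁, z₂) · f(φ(z₁), φ(z₂)) also satisfies (∂₁^i g)(z, z) = 0 for all z ∈ 𝔻 and all 0 ≤ i ≤ m. (This is the pointwise content of Proposition 2.1(i): each subspace M_m of functions whose first m ∂₁-derivatives vanish on the diagonal is invariant under every weighted composition operator f ↦ c·(f∘(φ×φ)).) -/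
open Metric Set

/-- The partial derivative of a function of two complex variables with respect to
the first variable. -/
noncomputable def d1 (f : ℂ × ℂ → ℂ) : ℂ × ℂ → ℂ :=
  fun p => deriv (fun z => f (z, p.2)) p.1

/-- Iterated derivatives of a function holomorphic on the unit ball are
differentiable on the unit ball. -/
lemma iterDerivDiff {g : ℂ → ℂ} (hg : DifferentiableOn ℂ g (ball (0:ℂ) 1)) (k : ℕ) :
    DifferentiableOn ℂ (deriv^[k] g) (ball (0:ℂ) 1) := by
  have h : AnalyticOnNhd ℂ (deriv^[k] g) (ball (0:ℂ) 1) := by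
    induction k with
    | zero => exact hg.analyticOnNhd isOpen_ball
    | succ n ih => rw [Function.iterate_succ_apply']; exact ih.deriv
  exact h.differentiableOn

/-- Iterates of `d1` applied to a slice agree with iterated one-variable derivatives. -/
lemma d1_iter_slice : ∀ (k : ℕ) (a : ℂ × ℂ → ℂ) (u w : ℂ),
    d1^[k] a (u, w) = deriv^[k] (fun z => a (z, w)) u := by
  intro k
  induction k with
  | zero => intro a u w; rfl
  | succ n ih =>
    intro a u w
    rw [Function.iterate_succ_apply, Function.iterate_succ_apply]
    rw [ih (d1 a) u w]
    rfl

/-- each subspace `M_m` of functions whose first `m` `∂₁`-derivatives vanish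
on the diagonal is invariant under every weighted composition operator
`f ↦ c · (f ∘ (φ × φ))`. -/
theorem stmt0 (m : ℕ) (φ : ℂ → ℂ) (c f : ℂ × ℂ → ℂ)
    (hφmap : MapsTo φ (ball (0 : ℂ) 1) (ball (0 : ℂ) 1))
    (hφ : DifferentiableOn ℂ φ (ball (0 : ℂ) 1))
    (hc : DifferentiableOn ℂ c (ball (0 : ℂ) 1 ×ˢ ball (0 : ℂ) 1))
    (hf : DifferentiableOn ℂ f (ball (0 : ℂ) 1 ×ˢ ball (0 : ℂ) 1))
    (hvanish : ∀ i ≤ m, ∀ z ∈ ball (0 : ℂ) 1, d1^[i] f (z, z) = 0) :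
    ∀ i ≤ m, ∀ z ∈ ball (0 : ℂ) 1,
      d1^[i] (fun p => c p * f (φ p.1, φ p.2)) (z, z) = 0 := by
  set B := ball (0 : ℂ) 1 with hB
  set U := B ×ˢ B with hUdef
  -- slice differentiability property
  set P : (ℂ × ℂ → ℂ) → Prop := fun a => ∀ w ∈ B, DifferentiableOn ℂ (fun z => a (z, w)) B
    with hPdef
  have hslice : ∀ (a : ℂ × ℂ → ℂ), DifferentiableOn ℂ a U → P a := by
    intro a ha w hw
    refine ha.comp ?_ ?_
    · exact (differentiable_id.prodMk (differentiable_const w)).differentiableOn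
    · intro z hz; exact ⟨hz, hw⟩
  have hPc : P c := hslice c hc
  have hPf : P f := hslice f hf
  -- slices of iterated d1 of f are differentiable on B
  have hFdiff : ∀ (k : ℕ) (w : ℂ), w ∈ B → DifferentiableOn ℂ (fun u => d1^[k] f (u, w)) B := by
    intro k w hw
    have : (fun u => d1^[k] f (u, w)) = deriv^[k] (fun z => f (z, w)) := by
      funext u; exact d1_iter_slice k f u w
    rw [this]
    exact iterDerivDiff (hPf w hw) k
  -- P is preserved by d1
  have hPd1 : ∀ a, P a → P (d1 a) := by
    intro a ha w hw
    have : (fun z => d1 a (z, w)) = deriv (fun z => a (z, w)) := rfl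
    rw [this]
    exact iterDerivDiff (ha w hw) 1
  have hφd : DifferentiableOn ℂ (deriv φ) B := iterDerivDiff hφ 1
  set g : ℂ × ℂ → ℂ := fun p => c p * f (φ p.1, φ p.2) with hgdef
  -- main induction: each iterated d1 of g is, on U, a combination of iterated d1's of f
  -- composed with (φ × φ), with coefficients having differentiable first-variable slices
  have main : ∀ i : ℕ, ∃ (ι : Type) (_ : Fintype ι) (a : ι → ℂ × ℂ → ℂ) (k : ι → ℕ),
      (∀ j, P (a j)) ∧ (∀ j, k j ≤ i) ∧
      ∀ p ∈ U, d1^[i] g p = ∑ j, a j p * d1^[k j] f (φ p.1, φ p.2) := by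
    intro i
    induction i with
    | zero =>
      exact ⟨Unit, inferInstance, fun _ => c, fun _ => 0, fun _ => hPc, fun _ => le_refl _,
        fun p _ => by simp [hgdef]⟩
    | succ n ih =>
      obtain ⟨ι, _, a, k, hPa, hle, heq⟩ := ih
      refine ⟨ι ⊕ ι, inferInstance,
        Sum.elim (fun j => d1 (a j)) (fun j => fun p => a j p * deriv φ p.1),
        Sum.elim k (fun j => k j + 1), ?_, ?_, ?_⟩
      · rintro (j | j)
        · exact hPd1 (a j) (hPa j)
        · intro w hw
          exact ((hPa j) w hw).mul hφd
      · rintro (j | j)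
        · exact (hle j).trans (Nat.le_succ n)
        · exact Nat.succ_le_succ (hle j)
      · intro p hp
        have hp1 : p.1 ∈ B := hp.1
        have hp2 : p.2 ∈ B := hp.2
        -- the HasDerivAt computation
        have hDA : HasDerivAt
            (fun z => ∑ j, a j (z, p.2) * d1^[k j] f (φ z, φ p.2))
            (∑ j, (d1 (a j) p * d1^[k j] f (φ p.1, φ p.2) +
              a j p * (deriv φ p.1 * d1^[k j + 1] f (φ p.1, φ p.2)))) p.1 := by
          apply HasDerivAt.fun_sum
          intro j _
          have h1 : HasDerivAt (fun z => a j (z, p.2)) (d1 (a j) p) p.1 := by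
            have := ((hPa j p.2 hp2).differentiableAt (isOpen_ball.mem_nhds hp1)).hasDerivAt
            exact this
          have h2 : HasDerivAt (fun z => d1^[k j] f (φ z, φ p.2))
              (deriv φ p.1 * d1^[k j + 1] f (φ p.1, φ p.2)) p.1 := by
            have hw : φ p.2 ∈ B := hφmap hp2
            have hG : DifferentiableOn ℂ (fun u => d1^[k j] f (u, φ p.2)) B :=
              hFdiff (k j) (φ p.2) hw
            have hGat : HasDerivAt (fun u => d1^[k j] f (u, φ p.2))
                (deriv (fun u => d1^[k j] f (u, φ p.2)) (φ p.1)) (φ p.1) :=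
              (hG.differentiableAt (isOpen_ball.mem_nhds (hφmap hp1))).hasDerivAt
            have hφat : HasDerivAt φ (deriv φ p.1) p.1 :=
              (hφ.differentiableAt (isOpen_ball.mem_nhds hp1)).hasDerivAt
            have := hGat.comp p.1 hφat
            have hval : deriv (fun u => d1^[k j] f (u, φ p.2)) (φ p.1)
                = d1^[k j + 1] f (φ p.1, φ p.2) := by
              rw [Function.iterate_succ_apply']
              rfl
            rw [hval] at this
            rw [mul_comm]
            exact this
          exact h1.mul h2
        have hev : (fun z => d1^[n] g (z, p.2)) =ᶠ[nhds p.1]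
            (fun z => ∑ j, a j (z, p.2) * d1^[k j] f (φ z, φ p.2)) := by
          filter_upwards [isOpen_ball.mem_nhds hp1] with z hz
          exact heq (z, p.2) ⟨hz, hp2⟩
        have : d1^[n + 1] g p = deriv (fun z => d1^[n] g (z, p.2)) p.1 := by
          rw [Function.iterate_succ_apply']
          rfl
        rw [this, hev.deriv_eq, hDA.deriv, Fintype.sum_sum_type]
        simp only [Sum.elim_inl, Sum.elim_inr]
        rw [← Finset.sum_add_distrib]
        congr 1
        funext j
        ring
  intro i hi z hz
  obtain ⟨ι, _, a, k, hPa, hle, heq⟩ := main i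
  rw [heq (z, z) ⟨hz, hz⟩]
  apply Finset.sum_eq_zero
  intro j _
  have : d1^[k j] f (φ z, φ z) = 0 := hvanish (k j) ((hle j).trans hi) (φ z) (hφmap hz)
  simp [this]
end

section
/- For each integer m ≥ 0, the closed linear span in H of the set { P_m k_{(w,w)}^{(m)} : w ∈ 𝔻 } is equal to the subspace S_m. Equivalently, if f ∈ S_m satisfies ⟨f, P_m k_{(w,w)}^{(m)}⟩ = 0 for every w ∈ 𝔻, then f = 0. (Lemma 2.2.) -/
open Metric Set

/-- Lemma 2.2: the closed span of `{P_m k_{(w,w)}^{(m)} : w ∈ 𝔻}` equals `S_m`. -/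
theorem stmt3
    {H : Type*} [NormedAddCommGroup H] [InnerProductSpace ℂ H] [CompleteSpace H]
    (J : H →ₗ[ℂ] (ℂ × ℂ → ℂ)) (hJinj : Function.Injective J)
    (hJhol : ∀ f : H, DifferentiableOn ℂ (J f) (ball (0 : ℂ) 1 ×ˢ ball (0 : ℂ) 1))
    (k : ℂ × ℂ → ℕ → H)
    (hk : ∀ f : H, ∀ w ∈ ball (0 : ℂ) 1 ×ˢ ball (0 : ℂ) 1, ∀ j : ℕ,
      @inner ℂ H _ (k w j) f = d1^[j] (J f) w)
    (M : ℕ → Submodule ℂ H)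
    (hM : ∀ (m : ℕ) (f : H),
      f ∈ M m ↔ ∀ i ≤ m, ∀ z ∈ ball (0 : ℂ) 1, d1^[i] (J f) (z, z) = 0)
    (hMclosed : ∀ m : ℕ, IsClosed (M m : Set H))
    (S : ℕ → Submodule ℂ H)
    (hS0 : S 0 = (M 0)ᗮ)
    (hSsucc : ∀ m : ℕ, S (m + 1) = M m ⊓ (M (m + 1))ᗮ)
    (P : ℕ → H → H)
    (hPmem : ∀ (m : ℕ) (f : H), P m f ∈ S m)
    (hPorth : ∀ (m : ℕ) (f : H), f - P m f ∈ (S m)ᗮ)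
    (m : ℕ) :
    (Submodule.span ℂ {x : H | ∃ w ∈ ball (0 : ℂ) 1, x = P m (k (w, w) m)}).topologicalClosure
      = S m := by
  set T := (Submodule.span ℂ {x : H | ∃ w ∈ ball (0 : ℂ) 1, x = P m (k (w, w) m)}).topologicalClosure with hT
  have hSclosed : IsClosed (S m : Set H) := by
    cases m with
    | zero => rw [hS0]; exact Submodule.isClosed_orthogonal (M 0)
    | succ n =>
      rw [hSsucc n]
      exact (hMclosed n).inter (Submodule.isClosed_orthogonal (M (n+1)))
  have hTle : T ≤ S m := by
    apply Submodule.topologicalClosure_minimal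
    · rw [Submodule.span_le]
      rintro x ⟨w, hw, rfl⟩
      exact hPmem m _
    · exact hSclosed
  refine le_antisymm hTle ?_
  intro f hf
  haveI : CompleteSpace T := (Submodule.isClosed_topologicalClosure _).completeSpace_coe
  set g := (Submodule.orthogonalProjectionOnto T f : H) with hg
  have hgT : g ∈ T := (Submodule.orthogonalProjectionOnto T f).2
  have hhorth : f - g ∈ Tᗮ := Submodule.sub_starProjection_mem_orthogonal (K := T) f
  set h := f - g with hhdef
  have hhS : h ∈ S m := Submodule.sub_mem _ hf (hTle hgT)
  have key : ∀ w ∈ ball (0:ℂ) 1, d1^[m] (J h) (w, w) = 0 := by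
    intro w hw
    have hmem : ((w, w) : ℂ × ℂ) ∈ ball (0:ℂ) 1 ×ˢ ball (0:ℂ) 1 := ⟨hw, hw⟩
    rw [← hk h (w,w) hmem m]
    have hmemT : P m (k (w,w) m) ∈ T :=
      Submodule.le_topologicalClosure _ (Submodule.subset_span ⟨w, hw, rfl⟩)
    have h1 : (inner ℂ (P m (k (w,w) m)) h : ℂ) = 0 :=
      (Submodule.mem_orthogonal _ _).1 hhorth _ hmemT
    have h2 : (inner ℂ (k (w,w) m - P m (k (w,w) m)) h : ℂ) = 0 :=
      (Submodule.mem_orthogonal' _ _).1 (hPorth m _) h hhS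
    calc (inner ℂ (k (w,w) m) h : ℂ)
        = inner ℂ (P m (k (w,w) m)) h + inner ℂ (k (w,w) m - P m (k (w,w) m)) h := by
          rw [← inner_add_left]
          congr 1
          abel
      _ = 0 := by rw [h1, h2, add_zero]
  have hhM : h ∈ M m := by
    rw [hM]
    intro i hi z hz
    rcases eq_or_lt_of_le hi with rfl | hlt
    · exact key z hz
    · cases m with
      | zero => omega
      | succ n =>
        have hMn : h ∈ M n ⊓ (M (n+1))ᗮ := hSsucc n ▸ hhS
        exact (hM n h).1 hMn.1 i (by omega) z hz
  have hhO : h ∈ (M m)ᗮ := by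
    cases m with
    | zero => exact hS0 ▸ hhS
    | succ n =>
      have hMn : h ∈ M n ⊓ (M (n+1))ᗮ := hSsucc n ▸ hhS
      exact hMn.2
  have hzero : h = 0 := by
    have := (Submodule.mem_orthogonal _ _).1 hhO h hhM
    exact inner_self_eq_zero.mp this
  have hfg : f = g := by rwa [hhdef, sub_eq_zero] at hzero
  rw [hfg]; exact hgT
end

section
/- Fix an integer m ≥ 0. Suppose that for every φ ∈ Aut(𝔻) there exist a bounded linear operator π_φ : H → H and a holomorphic function c_φ : 𝔻² → ℂ with c_φ(0, 0) ≠ 0, such that (π_φ f)(z₁, z₂) = c_φ(z₁, z₂) · f(φ(z₁), φ(z₂)) for all f ∈ H and (z₁, z₂) ∈ 𝔻². Then S_m ≠ {0} if and only if P_m k_{(0,0)}^{(m)} ≠ 0. (Lemma 2.3.) -/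
open Metric Set Filter

private lemma evIter {f g : ℂ → ℂ} {a : ℂ} (h : f =ᶠ[nhds a] g) (n : ℕ) :
    deriv^[n] f =ᶠ[nhds a] deriv^[n] g := by
  induction n with
  | zero => exact h
  | succ n ih => rw [Function.iterate_succ_apply', Function.iterate_succ_apply']; exact ih.deriv

private lemma analyticAt_deriv {f : ℂ → ℂ} {a : ℂ} (h : AnalyticAt ℂ f a) :
    AnalyticAt ℂ (deriv f) a := by
  rcases h.exists_mem_nhds_analyticOnNhd with ⟨s, hs, hsa⟩
  exact hsa.deriv a (mem_of_mem_nhds hs)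

private lemma keyL : ∀ (m : ℕ) (a : ℂ) (Hf : ℂ → ℂ), AnalyticAt ℂ Hf a →
    (∀ i < m, deriv^[i] (fun ζ => (ζ - a) ^ m * Hf ζ) a = 0) ∧
    deriv^[m] (fun ζ => (ζ - a) ^ m * Hf ζ) a = m.factorial * Hf a := by
  intro m
  induction m with
  | zero =>
    intro a Hf _
    refine ⟨fun i hi => absurd hi (Nat.not_lt_zero i), ?_⟩
    simp
  | succ m ih =>
    intro a Hf hHf
    set K : ℂ → ℂ := fun ζ => (m + 1 : ℂ) * Hf ζ + (ζ - a) * deriv Hf ζ with hK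
    have hKan : AnalyticAt ℂ K a := by
      apply ((analyticAt_const.mul hHf).add
        (((analyticAt_id).sub analyticAt_const).mul (analyticAt_deriv hHf)))
    have hKa : K a = (m + 1 : ℂ) * Hf a := by simp [hK]
    have hev : deriv (fun ζ => (ζ - a) ^ (m + 1) * Hf ζ) =ᶠ[nhds a]
        fun ζ => (ζ - a) ^ m * K ζ := by
      filter_upwards [hHf.eventually_analyticAt] with y hy
      have h1 : HasDerivAt (fun ζ : ℂ => (ζ - a) ^ (m + 1))
          ((m + 1 : ℂ) * (y - a) ^ m) y := by
        have := ((hasDerivAt_id y).sub_const a).fun_pow (m + 1)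
        simpa [Nat.add_sub_cancel] using this
      have h2 : HasDerivAt Hf (deriv Hf y) y := hy.differentiableAt.hasDerivAt
      have := (h1.fun_mul h2).deriv
      rw [this]; simp only [hK]; ring
    have step : ∀ i : ℕ, deriv^[i + 1] (fun ζ => (ζ - a) ^ (m + 1) * Hf ζ) a
        = deriv^[i] (fun ζ => (ζ - a) ^ m * K ζ) a := by
      intro i
      rw [Function.iterate_succ_apply]
      exact (evIter hev i).self_of_nhds
    constructor
    · intro i hi
      match i with
      | 0 => simp
      | (j + 1) =>
        rw [step j]
        exact (ih a K hKan).1 j (by omega)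
    · rw [step m, (ih a K hKan).2, hKa, Nat.factorial_succ]
      push_cast
      ring

private lemma derivIterZero : ∀ m : ℕ, deriv^[m] (fun _ : ℂ => (0:ℂ)) = fun _ => 0
  | 0 => rfl
  | (n+1) => by rw [Function.iterate_succ_apply', derivIterZero n]; ext x; simp

private lemma keyF {m : ℕ} {a : ℂ} {v : ℂ → ℂ} (hv : AnalyticAt ℂ v a)
    (h0 : ∀ j < m, deriv^[j] v a = 0) :
    ∃ h : ℂ → ℂ, AnalyticAt ℂ h a ∧ (∀ᶠ ζ in nhds a, v ζ = (ζ - a) ^ m * h ζ) ∧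
      deriv^[m] v a = m.factorial * h a := by
  by_cases htop : analyticOrderAt v a = ⊤
  · refine ⟨0, analyticAt_const, ?_, ?_⟩
    · filter_upwards [analyticOrderAt_eq_top.mp htop] with ζ hζ
      simp [hζ]
    · have hz : v =ᶠ[nhds a] (fun _ => (0:ℂ)) := analyticOrderAt_eq_top.mp htop
      have := (evIter hz m).self_of_nhds
      rw [this]
      simp [derivIterZero m]
  · obtain ⟨n, hn⟩ := WithTop.ne_top_iff_exists.mp htop
    obtain ⟨g, hg, hga, hgev⟩ := (hv.analyticOrderAt_eq_natCast (n := n)).mp hn.symm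
    have hgev' : ∀ᶠ ζ in nhds a, v ζ = (ζ - a) ^ n * g ζ := by
      filter_upwards [hgev] with ζ h; simpa [smul_eq_mul] using h
    have hmn : m ≤ n := by
      by_contra hlt
      push_neg at hlt
      have h1 := h0 n hlt
      have h2 := (evIter hgev' n).self_of_nhds
      rw [h2, (keyL n a g hg).2] at h1
      have hfac : (n.factorial : ℂ) ≠ 0 := Nat.cast_ne_zero.mpr n.factorial_ne_zero
      rcases mul_eq_zero.mp h1 with h | h
      · exact hfac h
      · exact hga h
    refine ⟨fun ζ => (ζ - a) ^ (n - m) * g ζ,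
      ((analyticAt_id.sub analyticAt_const).pow _).mul hg, ?_, ?_⟩
    · filter_upwards [hgev'] with ζ h
      rw [h, ← mul_assoc, ← pow_add, Nat.add_sub_cancel' hmn]
    · rw [(evIter (by
        filter_upwards [hgev'] with ζ h
        rw [h, ← mul_assoc, ← pow_add, Nat.add_sub_cancel' hmn] : v =ᶠ[nhds a]
          fun ζ => (ζ - a) ^ m * ((ζ - a) ^ (n - m) * g ζ)) m).self_of_nhds]
      exact (keyL m a _ (((analyticAt_id.sub analyticAt_const).pow _).mul hg)).2

private lemma normSq_key (a b : ℂ) :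
    Complex.normSq (1 + (starRingEnd ℂ) a * b) - Complex.normSq (b + a)
      = (1 - Complex.normSq a) * (1 - Complex.normSq b) := by
  simp only [Complex.normSq_apply, Complex.add_re, Complex.add_im, Complex.mul_re,
    Complex.mul_im, Complex.conj_re, Complex.conj_im, Complex.one_re, Complex.one_im]
  ring

private lemma normSq_lt_one {z : ℂ} (hz : z ∈ ball (0:ℂ) 1) : Complex.normSq z < 1 := by
  rw [mem_ball_zero_iff] at hz
  have : Complex.normSq z = ‖z‖ ^ 2 := by
    rw [← Complex.sq_norm]
  rw [this]
  nlinarith [norm_nonneg z]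

private lemma mob_lt {z w : ℂ} (hz : z ∈ ball (0:ℂ) 1) (hw : w ∈ ball (0:ℂ) 1) :
    Complex.normSq (w + z) < Complex.normSq (1 + (starRingEnd ℂ) z * w) := by
  have h := normSq_key z w
  nlinarith [normSq_lt_one hz, normSq_lt_one hw]

private lemma mob_denom_ne {z w : ℂ} (hz : z ∈ ball (0:ℂ) 1) (hw : w ∈ ball (0:ℂ) 1) :
    1 + (starRingEnd ℂ) z * w ≠ 0 := by
  intro h
  have := mob_lt hz hw
  rw [h] at this
  simp at this
  nlinarith [Complex.normSq_nonneg (w + z)]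

private lemma mob_mem {z w : ℂ} (hz : z ∈ ball (0:ℂ) 1) (hw : w ∈ ball (0:ℂ) 1) :
    (w + z) / (1 + (starRingEnd ℂ) z * w) ∈ ball (0:ℂ) 1 := by
  rw [mem_ball_zero_iff, norm_div]
  have hd : (0:ℝ) < ‖1 + (starRingEnd ℂ) z * w‖ := by
    rw [norm_pos_iff]; exact mob_denom_ne hz hw
  rw [div_lt_one hd]
  have h := mob_lt hz hw
  have e1 : Complex.normSq (w + z) = ‖w + z‖ ^ 2 := by
    rw [← Complex.sq_norm]
  have e2 : Complex.normSq (1 + (starRingEnd ℂ) z * w) = ‖1 + (starRingEnd ℂ) z * w‖ ^ 2 := by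
    rw [← Complex.sq_norm]
  rw [e1, e2] at h
  nlinarith [norm_nonneg (w + z), hd]

private lemma mob_cancel {c w z : ℂ} (h1 : 1 + c * w ≠ 0) (hE : 1 - c * z ≠ 0) :
    ((w + z) / (1 + c * w) + -z) / (1 + -c * ((w + z) / (1 + c * w))) = w := by
  have e1 : (w + z) / (1 + c * w) + -z = (w * (1 - c * z)) / (1 + c * w) := by
    rw [div_add' _ _ _ h1]; congr 1; ring
  have e2 : 1 + -c * ((w + z) / (1 + c * w)) = (1 - c * z) / (1 + c * w) := by
    field_simp; ring
  rw [e1, e2, div_div_div_cancel_right₀]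
  · exact mul_div_cancel_right₀ w hE
  · exact h1

private lemma isDiscAut_mob {z : ℂ} (hz : z ∈ ball (0:ℂ) 1) :
    Set.MapsTo (fun w => (w + z) / (1 + (starRingEnd ℂ) z * w)) (ball (0:ℂ) 1) (ball (0:ℂ) 1) ∧
    DifferentiableOn ℂ (fun w => (w + z) / (1 + (starRingEnd ℂ) z * w)) (ball (0:ℂ) 1) ∧
    ∃ ψ : ℂ → ℂ, Set.MapsTo ψ (ball (0 : ℂ) 1) (ball (0 : ℂ) 1) ∧
      DifferentiableOn ℂ ψ (ball (0 : ℂ) 1) ∧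
      (∀ w ∈ ball (0 : ℂ) 1, ψ ((w + z) / (1 + (starRingEnd ℂ) z * w)) = w) ∧
      (∀ w ∈ ball (0 : ℂ) 1, (ψ w + z) / (1 + (starRingEnd ℂ) z * ψ w) = w) := by
  have hzn : -z ∈ ball (0:ℂ) 1 := by rwa [mem_ball_zero_iff, norm_neg, ← mem_ball_zero_iff]
  refine ⟨fun w hw => mob_mem hz hw, ?_, fun w => (w + -z) / (1 + (starRingEnd ℂ) (-z) * w),
    fun w hw => mob_mem hzn hw, ?_, ?_, ?_⟩
  · intro w hw
    exact ((differentiableAt_id.add_const z).div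
      ((differentiableAt_const _).add ((differentiableAt_const _).mul differentiableAt_id))
      (mob_denom_ne hz hw)).differentiableWithinAt
  · intro w hw
    exact ((differentiableAt_id.add_const (-z)).div
      ((differentiableAt_const _).add ((differentiableAt_const _).mul differentiableAt_id))
      (mob_denom_ne hzn hw)).differentiableWithinAt
  · intro w hw
    have h1 : 1 + (starRingEnd ℂ) z * w ≠ 0 := mob_denom_ne hz hw
    have hd2 : 1 - (starRingEnd ℂ) z * z ≠ 0 := by
      have := mob_denom_ne hz hzn
      simpa [mul_neg, sub_eq_add_neg] using this
    simp only [map_neg]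
    exact mob_cancel h1 hd2
  · intro w hw
    have h1 : 1 + -((starRingEnd ℂ) z) * w ≠ 0 := by
      have := mob_denom_ne hzn hw; simpa [map_neg] using this
    have hd2 : 1 - -((starRingEnd ℂ) z) * (-z) ≠ 0 := by
      have := mob_denom_ne hz hzn
      simpa [mul_neg, sub_eq_add_neg] using this
    have := mob_cancel h1 hd2
    simp only [map_neg, neg_neg] at this ⊢
    exact this

/-- A function `ℂ → ℂ` restricts to a biholomorphic automorphism of the unit disc. -/
def IsDiscAut (φ : ℂ → ℂ) : Prop :=
  Set.MapsTo φ (ball (0 : ℂ) 1) (ball (0 : ℂ) 1) ∧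
  DifferentiableOn ℂ φ (ball (0 : ℂ) 1) ∧
  ∃ ψ : ℂ → ℂ, Set.MapsTo ψ (ball (0 : ℂ) 1) (ball (0 : ℂ) 1) ∧
    DifferentiableOn ℂ ψ (ball (0 : ℂ) 1) ∧
    (∀ z ∈ ball (0 : ℂ) 1, ψ (φ z) = z) ∧ (∀ z ∈ ball (0 : ℂ) 1, φ (ψ z) = z)

private lemma d1_slice (F : ℂ × ℂ → ℂ) (i : ℕ) (z₁ z₂ : ℂ) :
    d1^[i] F (z₁, z₂) = deriv^[i] (fun ζ => F (ζ, z₂)) z₁ := by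
  induction i generalizing F with
  | zero => rfl
  | succ n ih =>
    rw [Function.iterate_succ_apply, ih (d1 F)]
    rw [Function.iterate_succ_apply]
    congr 1

private lemma sliceA {F : ℂ × ℂ → ℂ}
    (hF : DifferentiableOn ℂ F (ball (0:ℂ) 1 ×ˢ ball (0:ℂ) 1))
    {w₂ : ℂ} (hw₂ : w₂ ∈ ball (0:ℂ) 1) {x : ℂ} (hx : x ∈ ball (0:ℂ) 1) :
    AnalyticAt ℂ (fun ζ => F (ζ, w₂)) x := by
  have hdiff : DifferentiableOn ℂ (fun ζ => F (ζ, w₂)) (ball (0:ℂ) 1) := by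
    intro y hy
    exact (hF (y, w₂) (Set.mk_mem_prod hy hw₂)).comp y
      (differentiableWithinAt_id.prodMk (differentiableWithinAt_const _))
      (fun ζ hζ => Set.mk_mem_prod hζ hw₂)
  exact hdiff.analyticAt (isOpen_ball.mem_nhds hx)


/-- Lemma 2.3: if for every disc automorphism `φ` there is a bounded weighted
composition operator with weight non-vanishing at the origin, then `S_m ≠ {0}` iff
`P_m k_{(0,0)}^{(m)} ≠ 0`. -/
theorem stmt4
    {H : Type*} [NormedAddCommGroup H] [InnerProductSpace ℂ H] [CompleteSpace H]
    (J : H →ₗ[ℂ] (ℂ × ℂ → ℂ)) (hJinj : Function.Injective J)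
    (hJhol : ∀ f : H, DifferentiableOn ℂ (J f) (ball (0 : ℂ) 1 ×ˢ ball (0 : ℂ) 1))
    (k : ℂ × ℂ → ℕ → H)
    (hk : ∀ f : H, ∀ w ∈ ball (0 : ℂ) 1 ×ˢ ball (0 : ℂ) 1, ∀ j : ℕ,
      @inner ℂ H _ (k w j) f = d1^[j] (J f) w)
    (M : ℕ → Submodule ℂ H)
    (hM : ∀ (m : ℕ) (f : H),
      f ∈ M m ↔ ∀ i ≤ m, ∀ z ∈ ball (0 : ℂ) 1, d1^[i] (J f) (z, z) = 0)
    (hMclosed : ∀ m : ℕ, IsClosed (M m : Set H))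
    (S : ℕ → Submodule ℂ H)
    (hS0 : S 0 = (M 0)ᗮ)
    (hSsucc : ∀ m : ℕ, S (m + 1) = M m ⊓ (M (m + 1))ᗮ)
    (P : ℕ → H → H)
    (hPmem : ∀ (m : ℕ) (f : H), P m f ∈ S m)
    (hPorth : ∀ (m : ℕ) (f : H), f - P m f ∈ (S m)ᗮ)
    (hπ : ∀ φ : ℂ → ℂ, IsDiscAut φ →
      ∃ (T : H →L[ℂ] H) (cφ : ℂ × ℂ → ℂ),
        DifferentiableOn ℂ cφ (ball (0 : ℂ) 1 ×ˢ ball (0 : ℂ) 1) ∧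
        cφ (0, 0) ≠ 0 ∧
        ∀ f : H, ∀ z ∈ ball (0 : ℂ) 1 ×ˢ ball (0 : ℂ) 1,
          J (T f) z = cφ z * J f (φ z.1, φ z.2))
    (m : ℕ) :
    S m ≠ ⊥ ↔ P m (k ((0 : ℂ), (0 : ℂ)) m) ≠ 0 := by
  have hball0 : (0:ℂ) ∈ ball (0:ℂ) 1 := by simp
  have h00 : ((0:ℂ),(0:ℂ)) ∈ ball (0:ℂ) 1 ×ˢ ball (0:ℂ) 1 := Set.mk_mem_prod hball0 hball0
  constructor
  · intro hSne hP0
    apply hSne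
    rw [Submodule.eq_bot_iff]
    intro f hf
    have hfperp : f ∈ (M m)ᗮ := by
      rcases m with _ | m'
      · rwa [hS0] at hf
      · rw [hSsucc m'] at hf; exact hf.2
    have hflow : ∀ i < m, ∀ w ∈ ball (0:ℂ) 1, d1^[i] (J f) (w, w) = 0 := by
      rcases m with _ | m'
      · intro i hi; omega
      · rw [hSsucc m'] at hf
        intro i hi w hw
        exact (hM m' f).mp hf.1 i (by omega) w hw
    have hdiag : ∀ z ∈ ball (0:ℂ) 1, d1^[m] (J f) (z, z) = 0 := by
      intro z hz
      set cz : ℂ := (starRingEnd ℂ) z with hcz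
      set φ : ℂ → ℂ := fun w => (w + z) / (1 + cz * w) with hφ
      have hAut : IsDiscAut φ := isDiscAut_mob hz
      obtain ⟨T, c, hcdiff, hc0, hT⟩ := hπ φ hAut
      have hφmem : ∀ w ∈ ball (0:ℂ) 1, φ w ∈ ball (0:ℂ) 1 := fun w hw => mob_mem hz hw
      have hφ0 : φ 0 = z := by simp [hφ]
      have hzz : 1 - cz * z ≠ 0 := by
        have hzn : -z ∈ ball (0:ℂ) 1 := by
          rwa [mem_ball_zero_iff, norm_neg, ← mem_ball_zero_iff]
        have := mob_denom_ne hz hzn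
        simpa [hcz, mul_neg, sub_eq_add_neg] using this
      have key : ∀ w ∈ ball (0:ℂ) 1,
          (∀ i < m, d1^[i] (J (T f)) (w, w) = 0) ∧
          ∃ hfn : ℂ → ℂ,
            deriv^[m] (fun ζ => J f (ζ, φ w)) (φ w) = (m.factorial : ℂ) * hfn (φ w) ∧
            d1^[m] (J (T f)) (w, w) = (m.factorial : ℂ) *
              (c (w, w) * ((1 - cz * z) / ((1 + cz * w) * (1 + cz * w))) ^ m * hfn (φ w)) := by
        intro w hw
        have hφw : φ w ∈ ball (0:ℂ) 1 := hφmem w hw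
        have hvA : AnalyticAt ℂ (fun ζ => J f (ζ, φ w)) (φ w) := sliceA (hJhol f) hφw hφw
        have hv0 : ∀ j < m, deriv^[j] (fun ζ => J f (ζ, φ w)) (φ w) = 0 := by
          intro j hj
          rw [← d1_slice]
          exact hflow j hj (φ w) hφw
        obtain ⟨h, hhA, hhev, hhval⟩ := keyF hvA hv0
        have hdw : 1 + cz * w ≠ 0 := mob_denom_ne hz hw
        have hφA : AnalyticAt ℂ φ w := by
          apply (analyticAt_id.add analyticAt_const).div
            (analyticAt_const.add (analyticAt_const.mul analyticAt_id)) hdw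
        have hrA : AnalyticAt ℂ (fun ζ => (1 - cz * z) / ((1 + cz * ζ) * (1 + cz * w))) w := by
          apply analyticAt_const.div
            ((analyticAt_const.add (analyticAt_const.mul analyticAt_id)).mul analyticAt_const)
            (mul_ne_zero hdw hdw)
        have hHA : AnalyticAt ℂ (fun ζ =>
            c (ζ, w) * ((1 - cz * z) / ((1 + cz * ζ) * (1 + cz * w))) ^ m * h (φ ζ)) w :=
          ((sliceA hcdiff hw hw).mul (hrA.pow m)).mul (hhA.comp hφA)
        have hslev : (fun ζ => J (T f) (ζ, w)) =ᶠ[nhds w] fun ζ => (ζ - w) ^ m *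
            (c (ζ, w) * ((1 - cz * z) / ((1 + cz * ζ) * (1 + cz * w))) ^ m * h (φ ζ)) := by
          filter_upwards [isOpen_ball.mem_nhds hw,
            Filter.Tendsto.eventually hφA.continuousAt hhev] with ζ hζ hφζ
          rw [hT f (ζ, w) (Set.mk_mem_prod hζ hw)]
          rw [hφζ]
          have hfac : φ ζ - φ w = (ζ - w) * ((1 - cz * z) / ((1 + cz * ζ) * (1 + cz * w))) := by
            have hdζ : 1 + cz * ζ ≠ 0 := mob_denom_ne hz hζ
            simp only [hφ]
            rw [div_sub_div _ _ hdζ hdw, ← mul_div_assoc]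
            congr 1; ring
          rw [hfac, mul_pow]
          ring
        constructor
        · intro i hi
          rw [d1_slice, (evIter hslev i).self_of_nhds]
          exact (keyL m w _ hHA).1 i hi
        · refine ⟨h, hhval, ?_⟩
          rw [d1_slice, (evIter hslev m).self_of_nhds]
          exact (keyL m w _ hHA).2
      haveI : CompleteSpace (M m) := (hMclosed m).completeSpace_coe
      obtain ⟨g, hgM, h₂, hh₂, hTfeq⟩ := (M m).exists_add_mem_mem_orthogonal (T f)
      have hh₂S : h₂ ∈ S m := by
        rcases m with _ | m'
        · rwa [hS0]
        · rw [hSsucc m']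
          refine ⟨?_, hh₂⟩
          have hTfM : T f ∈ M m' :=
            (hM m' (T f)).mpr (fun i hi w hw => (key w hw).1 i (by omega))
          have hgM' : g ∈ M m' :=
            (hM m' g).mpr (fun i hi w hw => (hM (m'+1) g).mp hgM i (by omega) w hw)
          have he : h₂ = T f - g := by rw [hTfeq]; abel
          rw [he]
          exact Submodule.sub_mem _ hTfM hgM'
      have hinner : (inner ℂ (k ((0:ℂ),(0:ℂ)) m) (T f) : ℂ) = 0 := by
        rw [hTfeq, inner_add_right]
        have e1 : (inner ℂ (k ((0:ℂ),(0:ℂ)) m) g : ℂ) = 0 := by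
          rw [hk g ((0:ℂ),(0:ℂ)) h00 m]
          exact (hM m g).mp hgM m le_rfl 0 hball0
        have e2 : (inner ℂ (k ((0:ℂ),(0:ℂ)) m) h₂ : ℂ) = 0 := by
          have h3 := (Submodule.mem_orthogonal (S m) _).mp
            (hPorth m (k ((0:ℂ),(0:ℂ)) m)) h₂ hh₂S
          rw [inner_eq_zero_symm] at h3
          rw [hP0, sub_zero] at h3
          exact h3
        rw [e1, e2, add_zero]
      have hd1Tf : d1^[m] (J (T f)) ((0:ℂ), (0:ℂ)) = 0 := by
        rw [← hk (T f) ((0:ℂ),(0:ℂ)) h00 m]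
        exact hinner
      obtain ⟨-, hfn, hval, heq⟩ := key 0 hball0
      rw [hd1Tf] at heq
      have hfacne : (m.factorial : ℂ) ≠ 0 := Nat.cast_ne_zero.mpr m.factorial_ne_zero
      have hXne : ((1 - cz * z) / ((1 + cz * 0) * (1 + cz * 0))) ^ m ≠ 0 := by
        apply pow_ne_zero
        apply div_ne_zero hzz
        simp
      have hfn0 : hfn (φ 0) = 0 := by
        rcases mul_eq_zero.mp heq.symm with h | h
        · exact absurd h hfacne
        · rcases mul_eq_zero.mp h with h' | h'
          · rcases mul_eq_zero.mp h' with h'' | h''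
            · exact absurd h'' hc0
            · exact absurd h'' hXne
          · exact h'
      rw [d1_slice, ← hφ0, hval, hfn0, mul_zero]
    have hfM : f ∈ M m := by
      refine (hM m f).mpr (fun i hi w hw => ?_)
      rcases lt_or_eq_of_le hi with hlt | heqm
      · exact hflow i hlt w hw
      · subst heqm
        exact hdiag w hw
    exact inner_self_eq_zero.mp ((Submodule.mem_orthogonal (M m) f).mp hfperp f hfM)
  · intro hPne hSbot
    apply hPne
    have hmem := hPmem m (k ((0:ℂ),(0:ℂ)) m)
    rw [hSbot] at hmem
    exact (Submodule.mem_bot ℂ).mp hmem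
end

section
/- For each integer m ≥ 0: (a) for every f ∈ S_m and every w ∈ 𝔻 one has (∂₁^m f)(w, w) = ⟨f, P_m k_{(w,w)}^{(m)}⟩; (b) the linear map Γ_m from S_m to functions on 𝔻 defined by (Γ_m f)(z) = (∂₁^m f)(z, z) is injective. Consequently, transporting the inner product of S_m to the image of Γ_m, the function K_m(z, w) := ⟨P_m k_{(w,w)}^{(m)}, P_m k_{(z,z)}^{(m)}⟩ is a reproducing kernel for that image: ⟨Γ_m f, Γ_m(P_m k_{(w,w)}^{(m)})⟩ = (Γ_m f)(w) for all f ∈ S_m, w ∈ 𝔻. (Proposition 2.4.) -/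
open Metric Set

lemma d1_iter (n : ℕ) (F : ℂ × ℂ → ℂ) (p : ℂ × ℂ) :
    d1^[n] F p = deriv^[n] (fun z => F (z, p.2)) p.1 := by
  induction n generalizing F with
  | zero => rfl
  | succ n ih =>
    rw [Function.iterate_succ_apply, ih]
    have h : (fun z => d1 F (z, p.2)) = deriv (fun x => F (x, p.2)) := rfl
    rw [h, ← Function.iterate_succ_apply]

lemma iter_deriv_analytic {u : ℂ → ℂ} {s : Set ℂ} (hu : AnalyticOnNhd ℂ u s) (n : ℕ) :
    AnalyticOnNhd ℂ (deriv^[n] u) s := by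
  induction n with
  | zero => exact hu
  | succ n ih => rw [Function.iterate_succ_apply']; exact ih.deriv

lemma iter_deriv_sub {u v : ℂ → ℂ} {s : Set ℂ} (hs : IsOpen s)
    (hu : AnalyticOnNhd ℂ u s) (hv : AnalyticOnNhd ℂ v s) (n : ℕ) :
    ∀ z ∈ s, deriv^[n] (fun x => u x - v x) z = deriv^[n] u z - deriv^[n] v z := by
  induction n with
  | zero => intro z _; rfl
  | succ n ih =>
    intro z hz
    have h1 : deriv^[n] (fun x => u x - v x) =ᶠ[nhds z]
        fun x => deriv^[n] u x - deriv^[n] v x := by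
      filter_upwards [hs.mem_nhds hz] with x hx using ih x hx
    rw [Function.iterate_succ_apply', h1.deriv_eq, Function.iterate_succ_apply',
      Function.iterate_succ_apply']
    exact deriv_sub (iter_deriv_analytic hu n z hz).differentiableAt
      (iter_deriv_analytic hv n z hz).differentiableAt

/-- Proposition 2.4: (a) for `f ∈ S_m` and `w ∈ 𝔻`,
`(∂₁^m f)(w,w) = ⟨f, P_m k_{(w,w)}^{(m)}⟩`; (b) the map `Γ_m f = (∂₁^m f)|_Δ` is injective
on `S_m`.  Consequently `K_m(z,w) = ⟨P_m k_{(w,w)}^{(m)}, P_m k_{(z,z)}^{(m)}⟩` is a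
reproducing kernel for the image of `Γ_m` with the transported inner product. -/
theorem stmt5
    {H : Type*} [NormedAddCommGroup H] [InnerProductSpace ℂ H] [CompleteSpace H]
    (J : H →ₗ[ℂ] (ℂ × ℂ → ℂ)) (hJinj : Function.Injective J)
    (hJhol : ∀ f : H, DifferentiableOn ℂ (J f) (ball (0 : ℂ) 1 ×ˢ ball (0 : ℂ) 1))
    (k : ℂ × ℂ → ℕ → H)
    (hk : ∀ f : H, ∀ w ∈ ball (0 : ℂ) 1 ×ˢ ball (0 : ℂ) 1, ∀ j : ℕ,
      @inner ℂ H _ (k w j) f = d1^[j] (J f) w)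
    (M : ℕ → Submodule ℂ H)
    (hM : ∀ (m : ℕ) (f : H),
      f ∈ M m ↔ ∀ i ≤ m, ∀ z ∈ ball (0 : ℂ) 1, d1^[i] (J f) (z, z) = 0)
    (hMclosed : ∀ m : ℕ, IsClosed (M m : Set H))
    (S : ℕ → Submodule ℂ H)
    (hS0 : S 0 = (M 0)ᗮ)
    (hSsucc : ∀ m : ℕ, S (m + 1) = M m ⊓ (M (m + 1))ᗮ)
    (P : ℕ → H → H)
    (hPmem : ∀ (m : ℕ) (f : H), P m f ∈ S m)
    (hPorth : ∀ (m : ℕ) (f : H), f - P m f ∈ (S m)ᗮ)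
    (m : ℕ) :
    (∀ f ∈ S m, ∀ w ∈ ball (0 : ℂ) 1,
      d1^[m] (J f) (w, w) = @inner ℂ H _ (P m (k (w, w) m)) f) ∧
    (∀ f ∈ S m, ∀ g ∈ S m,
      (∀ z ∈ ball (0 : ℂ) 1, d1^[m] (J f) (z, z) = d1^[m] (J g) (z, z)) → f = g) := by
  constructor
  · intro f hf w hw
    have hww : (w, w) ∈ ball (0 : ℂ) 1 ×ˢ ball (0 : ℂ) 1 := ⟨hw, hw⟩
    have h0 : @inner ℂ H _ f (k (w, w) m - P m (k (w, w) m)) = 0 :=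
      (Submodule.mem_orthogonal _ _).1 (hPorth m (k (w, w) m)) f hf
    have h1 : @inner ℂ H _ (k (w, w) m - P m (k (w, w) m)) f = 0 := by
      rw [← inner_conj_symm, h0, map_zero]
    have h2 : @inner ℂ H _ (k (w, w) m) f = @inner ℂ H _ (P m (k (w, w) m)) f := by
      have := inner_sub_left (𝕜 := ℂ) (k (w, w) m) (P m (k (w, w) m)) f
      rw [h1] at this
      linear_combination -this
    rw [← h2, hk f _ hww m]
  · intro f hf g hg hfg
    have hdiag : ∀ z ∈ ball (0 : ℂ) 1, d1^[m] (J (f - g)) (z, z) = 0 := by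
      intro z hz
      have hu : AnalyticOnNhd ℂ (fun x => J f (x, z)) (ball (0 : ℂ) 1) := by
        refine DifferentiableOn.analyticOnNhd ?_ isOpen_ball
        exact (hJhol f).comp (differentiableOn_id.prodMk (differentiableOn_const z))
          (fun x hx => ⟨hx, hz⟩)
      have hv : AnalyticOnNhd ℂ (fun x => J g (x, z)) (ball (0 : ℂ) 1) := by
        refine DifferentiableOn.analyticOnNhd ?_ isOpen_ball
        exact (hJhol g).comp (differentiableOn_id.prodMk (differentiableOn_const z))
          (fun x hx => ⟨hx, hz⟩)
      have hJ : J (f - g) = fun p => J f p - J g p := by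
        rw [map_sub]; rfl
      have e1 : d1^[m] (J (f - g)) (z, z)
          = deriv^[m] (fun x => J f (x, z) - J g (x, z)) z := by
        rw [hJ] at *; exact d1_iter m _ (z, z)
      have e2 : deriv^[m] (fun x => J f (x, z)) z = d1^[m] (J f) (z, z) :=
        (d1_iter m (J f) (z, z)).symm
      have e3 : deriv^[m] (fun x => J g (x, z)) z = d1^[m] (J g) (z, z) :=
        (d1_iter m (J g) (z, z)).symm
      rw [e1, iter_deriv_sub isOpen_ball hu hv m z hz, e2, e3, hfg z hz, sub_self]
    have hmem : f - g ∈ M m := by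
      rw [hM]
      intro i hi z hz
      rcases eq_or_lt_of_le hi with rfl | hlt
      · exact hdiag z hz
      · -- i < m, so m = m'+1 and f - g ∈ M m'
        obtain ⟨m', rfl⟩ : ∃ m', m = m' + 1 := ⟨m - 1, by omega⟩
        have hsub : f - g ∈ M m' := by
          have hf' : f ∈ M m' := ((hSsucc m') ▸ hf : f ∈ M m' ⊓ (M (m' + 1))ᗮ).1
          have hg' : g ∈ M m' := ((hSsucc m') ▸ hg : g ∈ M m' ⊓ (M (m' + 1))ᗮ).1
          exact (M m').sub_mem hf' hg'
        exact (hM m' _).1 hsub i (Nat.lt_succ_iff.mp hlt) z hz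
    have horth : f - g ∈ (M m)ᗮ := by
      cases m with
      | zero => exact (hS0 ▸ (S 0).sub_mem hf hg : f - g ∈ (M 0)ᗮ)
      | succ m' =>
        have : f - g ∈ M m' ⊓ (M (m' + 1))ᗮ := (hSsucc m') ▸ (S (m' + 1)).sub_mem hf hg
        exact this.2
    have : f - g = 0 := by
      have h0 : @inner ℂ H _ (f - g) (f - g) = 0 :=
        (Submodule.mem_orthogonal _ _).1 horth _ hmem
      exact inner_self_eq_zero.mp h0
    exact sub_eq_zero.mp this
end

section
/- Let m ≥ 1 be an integer, let φ : 𝔻 → 𝔻 be holomorphic, let c : 𝔻² → ℂ be holomorphic, and let f : 𝔻² → ℂ be holomorphic with (∂₁^j f)(z, z) = 0 for all z ∈ 𝔻 and all 0 ≤ j ≤ m − 1. Then for every z ∈ 𝔻, ∂₁^m ( (z₁,z₂) ↦ c(z₁,z₂) · f(φ(z₁), φ(z₂)) )(z, z) = c(z, z) · (φ'(z))^m · (∂₁^m f)(φ(z), φ(z)). (The key computation in Proposition 2.7 identifying the cocycle of the reduced representation as c_m(φ, z) = c(φ,(z,z))·(φ'(z))^m.) -/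
open Metric Set

lemma iter_deriv_congr {g h : ℂ → ℂ} {z : ℂ} (he : g =ᶠ[nhds z] h) (n : ℕ) :
    deriv^[n] g =ᶠ[nhds z] deriv^[n] h := by
  induction n with
  | zero => simpa using he
  | succ n ih =>
    rw [Function.iterate_succ_apply', Function.iterate_succ_apply']
    exact ih.deriv


lemma analyticAt_deriv_s9 {g : ℂ → ℂ} {z : ℂ} (h : AnalyticAt ℂ g z) :
    AnalyticAt ℂ (deriv g) z := by
  have h1 : AnalyticAt ℂ (fun x => fderiv ℂ g x 1) z :=
    ((ContinuousLinearMap.apply ℂ ℂ (1 : ℂ)).analyticAt _).comp h.fderiv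
  have : (fun x => fderiv ℂ g x 1) = deriv g := by
    funext x; exact fderiv_apply_one_eq_deriv
  rwa [this] at h1

lemma iter_deriv_add {g h : ℂ → ℂ} {z : ℂ} (n : ℕ) (hg : AnalyticAt ℂ g z)
    (hh : AnalyticAt ℂ h z) :
    deriv^[n] (fun u => g u + h u) z = deriv^[n] g z + deriv^[n] h z := by
  induction n generalizing g h with
  | zero => simp
  | succ n ih =>
    rw [Function.iterate_succ_apply, Function.iterate_succ_apply,
      Function.iterate_succ_apply]
    have hev : deriv (fun u => g u + h u) =ᶠ[nhds z] fun u => deriv g u + deriv h u := by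
      filter_upwards [hg.eventually_analyticAt, hh.eventually_analyticAt] with u hgu hhu
      exact deriv_add hgu.differentiableAt hhu.differentiableAt
    rw [(iter_deriv_congr hev n).self_of_nhds]
    exact ih (analyticAt_deriv_s9 hg) (analyticAt_deriv_s9 hh)

lemma key (m : ℕ) (z : ℂ) (C φ F : ℂ → ℂ) (hC : AnalyticAt ℂ C z) (hφ : AnalyticAt ℂ φ z)
    (hF : AnalyticAt ℂ F (φ z)) (hvan : ∀ j < m, deriv^[j] F (φ z) = 0) :
    deriv^[m] (fun u => C u * F (φ u)) z = C z * (deriv φ z) ^ m * deriv^[m] F (φ z) := by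
  induction m generalizing C F with
  | zero => simp
  | succ m ih =>
    rw [Function.iterate_succ_apply]
    -- deriv of the product near z
    have hFφ : ∀ᶠ u in nhds z, AnalyticAt ℂ F (φ u) := by
      have := hF.eventually_analyticAt
      exact (hφ.continuousAt.eventually this)
    have hev : deriv (fun u => C u * F (φ u)) =ᶠ[nhds z]
        fun u => deriv C u * F (φ u) + (C u * deriv φ u) * deriv F (φ u) := by
      filter_upwards [hC.eventually_analyticAt, hφ.eventually_analyticAt, hFφ]
        with u hCu hφu hFu
      have hcomp : DifferentiableAt ℂ (fun v => F (φ v)) u :=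
        (hFu.differentiableAt.comp u hφu.differentiableAt)
      rw [deriv_fun_mul hCu.differentiableAt hcomp]
      have : deriv (fun v => F (φ v)) u = deriv F (φ u) * deriv φ u := by
        exact deriv_comp u hFu.differentiableAt hφu.differentiableAt
      rw [this]; ring
    rw [(iter_deriv_congr hev m).self_of_nhds]
    have h1 : AnalyticAt ℂ (fun u => deriv C u * F (φ u)) z :=
      (analyticAt_deriv_s9 hC).mul (hF.comp hφ)
    have h2 : AnalyticAt ℂ (fun u => (C u * deriv φ u) * deriv F (φ u)) z :=
      (hC.mul (analyticAt_deriv_s9 hφ)).mul ((analyticAt_deriv_s9 hF).comp hφ)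
    rw [iter_deriv_add m h1 h2]
    have e1 : deriv^[m] (fun u => deriv C u * F (φ u)) z
        = deriv C z * (deriv φ z) ^ m * deriv^[m] F (φ z) :=
      ih (deriv C) F (analyticAt_deriv_s9 hC) hF (fun j hj => hvan j (hj.trans (Nat.lt_succ_self m)))
    have e2 : deriv^[m] (fun u => (C u * deriv φ u) * deriv F (φ u)) z
        = (C z * deriv φ z) * (deriv φ z) ^ m * deriv^[m] (deriv F) (φ z) :=
      ih (fun u => C u * deriv φ u) (deriv F) (hC.mul (analyticAt_deriv_s9 hφ)) (analyticAt_deriv_s9 hF)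
        (fun j hj => by
          rw [← Function.iterate_succ_apply]
          exact hvan (j + 1) (Nat.succ_lt_succ hj))
    rw [e1, e2, hvan m (Nat.lt_succ_self m), ← Function.iterate_succ_apply]
    ring

lemma d1_iter_eq {F : ℂ × ℂ → ℂ} (n : ℕ) (a b : ℂ) :
    d1^[n] F (a, b) = deriv^[n] (fun u => F (u, b)) a := by
  induction n generalizing F with
  | zero => simp
  | succ n ih =>
    rw [Function.iterate_succ_apply, ih, Function.iterate_succ_apply]
    congr 1

/-- the key computation in Proposition 2.7: if the first `m - 1` partial
derivatives `∂₁^j f` vanish on the diagonal, then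
`∂₁^m ((z₁,z₂) ↦ c(z₁,z₂)·f(φ(z₁),φ(z₂)))(z,z) = c(z,z)·(φ'(z))^m·(∂₁^m f)(φ(z),φ(z))`. -/
theorem stmt9 (m : ℕ) (hm : 1 ≤ m) (φ : ℂ → ℂ) (c f : ℂ × ℂ → ℂ)
    (hφmap : MapsTo φ (ball (0 : ℂ) 1) (ball (0 : ℂ) 1))
    (hφ : DifferentiableOn ℂ φ (ball (0 : ℂ) 1))
    (hc : DifferentiableOn ℂ c (ball (0 : ℂ) 1 ×ˢ ball (0 : ℂ) 1))
    (hf : DifferentiableOn ℂ f (ball (0 : ℂ) 1 ×ˢ ball (0 : ℂ) 1))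
    (hvanish : ∀ j < m, ∀ z ∈ ball (0 : ℂ) 1, d1^[j] f (z, z) = 0) :
    ∀ z ∈ ball (0 : ℂ) 1,
      d1^[m] (fun p => c p * f (φ p.1, φ p.2)) (z, z)
        = c (z, z) * (deriv φ z) ^ m * d1^[m] f (φ z, φ z) := by
  intro z hz
  have hφz : φ z ∈ ball (0 : ℂ) 1 := hφmap hz
  have hopen : IsOpen (ball (0 : ℂ) 1 ×ˢ ball (0 : ℂ) 1) :=
    isOpen_ball.prod isOpen_ball
  -- slice analyticity
  have hsliceC : AnalyticAt ℂ (fun u => c (u, z)) z := by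
    have : DifferentiableOn ℂ (fun u => c (u, z)) (ball (0 : ℂ) 1) := by
      intro u hu
      exact (hc (u, z) ⟨hu, hz⟩).comp u
        ((differentiableAt_id.prodMk (differentiableAt_const z)).differentiableWithinAt)
        (fun v (hv : v ∈ ball (0 : ℂ) 1) => (⟨hv, hz⟩ : (v, z) ∈ ball (0 : ℂ) 1 ×ˢ ball (0 : ℂ) 1))
    exact this.analyticAt (isOpen_ball.mem_nhds hz)
  have hsliceF : AnalyticAt ℂ (fun u => f (u, φ z)) (φ z) := by
    have : DifferentiableOn ℂ (fun u => f (u, φ z)) (ball (0 : ℂ) 1) := by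
      intro u hu
      exact (hf (u, φ z) ⟨hu, hφz⟩).comp u
        ((differentiableAt_id.prodMk (differentiableAt_const (φ z))).differentiableWithinAt)
        (fun v (hv : v ∈ ball (0 : ℂ) 1) => (⟨hv, hφz⟩ : (v, φ z) ∈ ball (0 : ℂ) 1 ×ˢ ball (0 : ℂ) 1))
    exact this.analyticAt (isOpen_ball.mem_nhds hφz)
  have hφa : AnalyticAt ℂ φ z := hφ.analyticAt (isOpen_ball.mem_nhds hz)
  have hL : d1^[m] (fun p => c p * f (φ p.1, φ p.2)) (z, z)
      = deriv^[m] (fun u => c (u, z) * f (φ u, φ z)) z := d1_iter_eq m z z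
  rw [hL, key m z (fun u => c (u, z)) φ (fun v => f (v, φ z)) hsliceC hφa hsliceF
    (fun j hj => by rw [← d1_iter_eq]; exact hvanish j hj (φ z) hφz),
    ← d1_iter_eq]
end

section
/- Let k be an odd positive integer and let f : 𝔻² → ℂ be holomorphic and symmetric, i.e., f(z₁, z₂) = f(z₂, z₁) for all (z₁, z₂) ∈ 𝔻². If (∂₁^i f)(z, z) = 0 for all z ∈ 𝔻 and all 0 ≤ i ≤ k − 1, then (∂₁^k f)(z, z) = 0 for all z ∈ 𝔻. (The key claim in the proof of Theorem 2.8(ii) showing S_k = {0} for odd k when the Hilbert space consists of symmetric functions.) -/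
open Metric Set

lemma d1_iterate (f : ℂ × ℂ → ℂ) (n : ℕ) (w : ℂ) :
    ∀ z : ℂ, d1^[n] f (z, w) = deriv^[n] (fun u => f (u, w)) z := by
  induction n with
  | zero => intro z; rfl
  | succ n ih =>
    intro z
    rw [Function.iterate_succ_apply', Function.iterate_succ_apply']
    show deriv (fun u => d1^[n] f (u, w)) z = _
    congr 1
    funext u
    exact ih u

lemma tail_bound {g : ℂ → ℂ} {p : FormalMultilinearSeries ℂ ℂ ℂ} {x : ℂ} {Rnn : NNReal} {M : ℝ}
    (hR : 0 < (Rnn : ℝ)) (hM : 0 ≤ M)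
    (hp : HasFPowerSeriesOnBall g p x Rnn)
    (hb : ∀ n, ‖p.coeff n‖ ≤ M / (Rnn : ℝ) ^ n)
    (k : ℕ) (hvc : ∀ i < k, p.coeff i = 0)
    {y : ℂ} (hy : ‖y‖ ≤ (Rnn : ℝ) / 2) :
    ‖g (x + y) - y ^ k * p.coeff k‖ ≤ (2 * M / (Rnn : ℝ) ^ (k + 1)) * ‖y‖ ^ (k + 1) := by
  set R : ℝ := (Rnn : ℝ) with hRdef
  have hymem : y ∈ Metric.eball (0 : ℂ) Rnn := by
    rw [mem_emetric_ball_zero_iff]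
    exact_mod_cast (show ‖y‖₊ < Rnn from by
      rw [← NNReal.coe_lt_coe, coe_nnnorm]; linarith)
  have hsum : HasSum (fun n => y ^ n * p.coeff n) (g (x + y)) := by
    have := hp.hasSum hymem
    simpa only [FormalMultilinearSeries.apply_eq_pow_smul_coeff, smul_eq_mul] using this
  have h2 : HasSum (fun n => y ^ (n + (k + 1)) * p.coeff (n + (k + 1)))
      (g (x + y) - ∑ i ∈ Finset.range (k + 1), y ^ i * p.coeff i) :=
    (hasSum_nat_add_iff' (k + 1)).mpr hsum
  have hfin : ∑ i ∈ Finset.range (k + 1), y ^ i * p.coeff i = y ^ k * p.coeff k := by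
    rw [Finset.sum_eq_single_of_mem k (Finset.self_mem_range_succ k)]
    intro i hi hik
    rw [hvc i (lt_of_le_of_ne (Nat.lt_succ_iff.mp (Finset.mem_range.mp hi)) hik), mul_zero]
  rw [hfin] at h2
  have ha0 : 0 ≤ ‖y‖ / R := by positivity
  have ha2 : ‖y‖ / R ≤ 1 / 2 := by
    rw [div_le_div_iff₀ hR (by norm_num : (0:ℝ) < 2)]
    linarith
  have hgb : ∀ n, ‖y ^ (n + (k + 1)) * p.coeff (n + (k + 1))‖ ≤
      (M * (‖y‖ / R) ^ (k + 1)) * (1 / 2) ^ n := by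
    intro n
    rw [norm_mul, norm_pow]
    calc ‖y‖ ^ (n + (k+1)) * ‖p.coeff (n + (k+1))‖
        ≤ ‖y‖ ^ (n + (k+1)) * (M / R ^ (n + (k+1))) :=
          mul_le_mul_of_nonneg_left (hb _) (by positivity)
      _ = (M * (‖y‖/R) ^ (k+1)) * (‖y‖/R) ^ n := by
          rw [div_pow, pow_add, div_pow]
          field_simp
          ring
      _ ≤ (M * (‖y‖/R) ^ (k+1)) * (1/2) ^ n :=
          mul_le_mul_of_nonneg_left (pow_le_pow_left₀ ha0 ha2 n) (by positivity)
  have hbs : Summable (fun n : ℕ => (M * (‖y‖ / R) ^ (k + 1)) * (1 / 2 : ℝ) ^ n) :=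
    (summable_geometric_of_lt_one (by norm_num) (by norm_num)).mul_left _
  have hgs : Summable fun n => ‖y ^ (n + (k + 1)) * p.coeff (n + (k + 1))‖ :=
    Summable.of_nonneg_of_le (fun n => norm_nonneg _) hgb hbs
  have hnorm : ‖g (x + y) - y ^ k * p.coeff k‖ ≤
      ∑' n, ‖y ^ (n + (k + 1)) * p.coeff (n + (k + 1))‖ := by
    rw [← h2.tsum_eq]
    exact norm_tsum_le_tsum_norm hgs
  have htsum : ∑' n, ‖y ^ (n + (k+1)) * p.coeff (n + (k+1))‖ ≤
      (M * (‖y‖ / R) ^ (k + 1)) * 2 := by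
    calc ∑' n, ‖y ^ (n + (k+1)) * p.coeff (n + (k+1))‖
        ≤ ∑' n, (M * (‖y‖ / R) ^ (k + 1)) * (1 / 2 : ℝ) ^ n := Summable.tsum_le_tsum hgb hgs hbs
      _ = (M * (‖y‖/R) ^ (k+1)) * ∑' n, (1/2:ℝ)^n := tsum_mul_left
      _ = (M * (‖y‖/R) ^ (k+1)) * 2 := by
          rw [tsum_geometric_of_lt_one (by norm_num) (by norm_num)]; norm_num
  have heq : (M * (‖y‖ / R) ^ (k + 1)) * 2 = (2 * M / R ^ (k + 1)) * ‖y‖ ^ (k + 1) := by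
    rw [div_pow]
    field_simp
  rw [heq] at htsum
  linarith

/-- key claim in the proof of Theorem 2.8(ii): for a symmetric holomorphic
function on the bidisc and odd `k`, if `∂₁^i f` vanishes on the diagonal for all `i ≤ k − 1`,
then so does `∂₁^k f`. -/
theorem stmt12 (k : ℕ) (hk : Odd k) (hkpos : 0 < k) (f : ℂ × ℂ → ℂ)
    (hf : DifferentiableOn ℂ f (ball (0 : ℂ) 1 ×ˢ ball (0 : ℂ) 1))
    (hsym : ∀ z₁ ∈ ball (0 : ℂ) 1, ∀ z₂ ∈ ball (0 : ℂ) 1, f (z₁, z₂) = f (z₂, z₁))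
    (hvanish : ∀ i < k, ∀ z ∈ ball (0 : ℂ) 1, d1^[i] f (z, z) = 0) :
    ∀ z ∈ ball (0 : ℂ) 1, d1^[k] f (z, z) = 0 := by
  intro z₀ hz₀
  rw [mem_ball_zero_iff] at hz₀
  have h1z : 0 < 1 - ‖z₀‖ := by linarith
  set δ : ℝ := (1 - ‖z₀‖) / 8 with hδdef
  have hδ : 0 < δ := by positivity
  set Rnn : NNReal := ⟨2 * δ, by positivity⟩ with hRnndef
  have hRreal : (Rnn : ℝ) = 2 * δ := rfl
  -- inclusions
  have hsub3 : closedBall z₀ (3 * δ) ⊆ ball (0 : ℂ) 1 := by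
    intro x hx
    rw [mem_closedBall, dist_eq_norm] at hx
    rw [mem_ball_zero_iff]
    calc ‖x‖ = ‖x - z₀ + z₀‖ := by ring_nf
      _ ≤ ‖x - z₀‖ + ‖z₀‖ := norm_add_le _ _
      _ ≤ 3 * δ + ‖z₀‖ := by linarith
      _ < 1 := by rw [hδdef]; linarith
  have hsubδ : closedBall z₀ δ ⊆ ball (0 : ℂ) 1 :=
    (closedBall_subset_closedBall (by linarith)).trans hsub3
  have hsubv : ∀ v ∈ closedBall z₀ δ, closedBall v (Rnn : ℝ) ⊆ closedBall z₀ (3 * δ) := by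
    intro v hv
    apply closedBall_subset_closedBall'
    rw [mem_closedBall] at hv
    rw [hRreal]
    linarith
  -- slices are differentiable
  have hslice : ∀ v ∈ closedBall z₀ δ,
      DifferentiableOn ℂ (fun u => f (u, v)) (closedBall v (Rnn : ℝ)) := by
    intro v hv u hu
    have hmem : (u, v) ∈ ball (0 : ℂ) 1 ×ˢ ball (0 : ℂ) 1 :=
      ⟨hsub3 (hsubv v hv hu), hsubδ hv⟩
    have hdf := hf _ hmem
    exact hdf.comp u ((differentiableWithinAt_id (𝕜 := ℂ)).prodMk (differentiableWithinAt_const v))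
      (fun u' (hu' : u' ∈ closedBall v (Rnn : ℝ)) =>
        (show (u', v) ∈ ball (0 : ℂ) 1 ×ˢ ball (0 : ℂ) 1 from ⟨hsub3 (hsubv v hv hu'), hsubδ hv⟩))
  set P : ℂ → FormalMultilinearSeries ℂ ℂ ℂ :=
    fun v => cauchyPowerSeries (fun u => f (u, v)) v Rnn with hPdef
  have hRnnpos : (0 : NNReal) < Rnn := by
    rw [← NNReal.coe_lt_coe, hRreal]
    positivity
  have HB : ∀ v ∈ closedBall z₀ δ,
      HasFPowerSeriesOnBall (fun u => f (u, v)) (P v) v Rnn :=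
    fun v hv => (hslice v hv).hasFPowerSeriesOnBall hRnnpos
  -- coefficients vs diagonal derivatives
  have hcoeff : ∀ v ∈ closedBall z₀ δ, ∀ n : ℕ,
      (n.factorial : ℂ) * (P v).coeff n = d1^[n] f (v, v) := by
    intro v hv n
    have h1 := (HB v hv).factorial_smul (1 : ℂ) n
    rw [← iteratedDeriv_eq_iteratedFDeriv] at h1
    have h2 : iteratedDeriv n (fun u => f (u, v)) v = d1^[n] f (v, v) := by
      rw [iteratedDeriv_eq_iterate]
      exact (d1_iterate f n v v).symm
    rw [h2] at h1
    rw [← h1, nsmul_eq_mul]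
    rfl
  have hcoeff0 : ∀ v ∈ closedBall z₀ δ, ∀ i < k, (P v).coeff i = 0 := by
    intro v hv i hi
    have h1 := hcoeff v hv i
    rw [hvanish i hi v (hsubδ hv)] at h1
    exact (mul_eq_zero.mp h1).resolve_left
      (Nat.cast_ne_zero.mpr (Nat.factorial_ne_zero i))
  -- uniform bound on f
  obtain ⟨M, hMb⟩ :=
    ((isCompact_closedBall z₀ (3 * δ)).prod (isCompact_closedBall z₀ δ)).exists_bound_of_continuousOn
      (hf.continuousOn.mono (prod_mono hsub3 hsubδ))
  have hM0 : 0 ≤ M :=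
    le_trans (norm_nonneg _)
      (hMb (z₀, z₀) ⟨mem_closedBall_self (by positivity), mem_closedBall_self hδ.le⟩)
  -- coefficient bounds
  have hcb : ∀ v ∈ closedBall z₀ δ, ∀ n : ℕ, ‖(P v).coeff n‖ ≤ M / (Rnn : ℝ) ^ n := by
    intro v hv n
    have hkey : ∀ θ : ℝ, ‖f (circleMap v (Rnn : ℝ) θ, v)‖ ≤ M := by
      intro θ
      refine hMb _ ⟨hsubv v hv ?_, hv⟩
      exact circleMap_mem_closedBall v (by rw [hRreal]; positivity) θ
    have hIb : ∫ θ in (0:ℝ)..2 * Real.pi, ‖f (circleMap v (Rnn : ℝ) θ, v)‖ ≤ M * (2 * Real.pi) := by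
      have h0 := intervalIntegral.norm_integral_le_of_norm_le_const (C := M) (a := (0:ℝ))
        (b := 2 * Real.pi) (f := fun θ => ‖f (circleMap v (Rnn : ℝ) θ, v)‖)
        (fun θ _ => by
          rw [Real.norm_eq_abs, abs_of_nonneg (norm_nonneg _)]
          exact hkey θ)
      have h1 : |2 * Real.pi - 0| = 2 * Real.pi := by
        rw [sub_zero, abs_of_pos Real.two_pi_pos]
      rw [h1] at h0
      exact le_trans (le_abs_self _) h0
    have h2 := norm_cauchyPowerSeries_le (fun u => f (u, v)) v (Rnn : ℝ) n
    have h3 : ((2 * Real.pi)⁻¹ * ∫ θ : ℝ in (0)..2 * Real.pi,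
        ‖f (circleMap v (Rnn : ℝ) θ, v)‖) * |(Rnn : ℝ)|⁻¹ ^ n ≤ M / (Rnn : ℝ) ^ n := by
      rw [abs_of_pos (show (0:ℝ) < (Rnn : ℝ) from by rw [hRreal]; positivity),
        div_eq_mul_inv, ← inv_pow]
      apply mul_le_mul_of_nonneg_right _ (by positivity)
      rw [inv_mul_le_iff₀ Real.two_pi_pos]
      calc (∫ θ : ℝ in (0)..2 * Real.pi, ‖f (circleMap v (Rnn : ℝ) θ, v)‖)
          ≤ M * (2 * Real.pi) := hIb
        _ = 2 * Real.pi * M := by ring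
    have h4 : ‖(P v).coeff n‖ ≤ ‖P v n‖ := by
      calc ‖(P v).coeff n‖ = ‖P v n (fun _ => (1 : ℂ))‖ := rfl
        _ ≤ ‖P v n‖ * ∏ _i : Fin n, ‖(1 : ℂ)‖ := (P v n).le_opNorm _
        _ = ‖P v n‖ := by simp
    exact le_trans h4 (le_trans h2 h3)
  -- remainder bound
  set C₀ : ℝ := 2 * M / (Rnn : ℝ) ^ (k + 1) with hC₀def
  have hC₀ : 0 ≤ C₀ := by
    rw [hC₀def, hRreal]
    positivity
  have hrem : ∀ v ∈ closedBall z₀ δ, ∀ y : ℂ, ‖y‖ ≤ δ →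
      ‖f (v + y, v) - y ^ k * (P v).coeff k‖ ≤ C₀ * ‖y‖ ^ (k + 1) := by
    intro v hv y hy
    exact tail_bound (by rw [hRreal]; positivity) hM0 (HB v hv) (hcb v hv) k
      (hcoeff0 v hv) (by rw [hRreal]; linarith)
  -- master antisymmetry inequality
  have hmaster : ∀ u ∈ closedBall z₀ δ, ∀ v ∈ closedBall z₀ δ, ‖u - v‖ ≤ δ →
      ‖(P u).coeff k + (P v).coeff k‖ * ‖u - v‖ ^ k ≤ (2 * C₀) * ‖u - v‖ ^ (k + 1) := by
    intro u hu v hv huv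
    have h1 := hrem v hv (u - v) huv
    rw [show v + (u - v) = u from by ring] at h1
    have h2 := hrem u hu (v - u) (by rwa [norm_sub_rev])
    rw [show u + (v - u) = v from by ring] at h2
    rw [show ‖v - u‖ = ‖u - v‖ from norm_sub_rev _ _] at h2
    have hse : f (v, u) = f (u, v) := hsym v (hsubδ hv) u (hsubδ hu)
    rw [hse] at h2
    have hnegpow : (v - u) ^ k = -((u - v) ^ k) := by
      rw [show v - u = -(u - v) from by ring, hk.neg_pow]
    have hkey : (u - v) ^ k * ((P u).coeff k + (P v).coeff k) =
        (f (u, v) - (v - u) ^ k * (P u).coeff k) - (f (u, v) - (u - v) ^ k * (P v).coeff k) := by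
      rw [hnegpow]; ring
    have hnk : ‖(u - v) ^ k * ((P u).coeff k + (P v).coeff k)‖ ≤ (2 * C₀) * ‖u - v‖ ^ (k + 1) := by
      rw [hkey]
      calc ‖(f (u, v) - (v - u) ^ k * (P u).coeff k) -
            (f (u, v) - (u - v) ^ k * (P v).coeff k)‖
          ≤ ‖f (u, v) - (v - u) ^ k * (P u).coeff k‖ +
            ‖f (u, v) - (u - v) ^ k * (P v).coeff k‖ := norm_sub_le _ _
        _ ≤ C₀ * ‖u - v‖ ^ (k + 1) + C₀ * ‖u - v‖ ^ (k + 1) := add_le_add h2 h1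
        _ = (2 * C₀) * ‖u - v‖ ^ (k + 1) := by ring
    rw [norm_mul, norm_pow] at hnk
    linarith [hnk]
  -- the three-point trick
  have hz₀mem : z₀ ∈ closedBall z₀ δ := mem_closedBall_self hδ.le
  have hsmall : ∀ t : ℝ, 0 < t → t ≤ δ / 2 →
      ‖(2 : ℂ) * (P z₀).coeff k‖ ≤ 8 * C₀ * t := by
    intro t ht ht2
    set u : ℂ := z₀ + (t : ℂ) with hudef
    set v : ℂ := z₀ + ((2 * t : ℝ) : ℂ) with hvdef
    have hnt : ‖(t : ℂ)‖ = t := by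
      rw [Complex.norm_real, Real.norm_eq_abs, abs_of_pos ht]
    have humem : u ∈ closedBall z₀ δ := by
      rw [mem_closedBall, dist_eq_norm, hudef, add_sub_cancel_left, hnt]
      linarith
    have hvmem : v ∈ closedBall z₀ δ := by
      rw [mem_closedBall, dist_eq_norm, hvdef, add_sub_cancel_left]
      rw [show ((2 * t : ℝ) : ℂ) = ((2 * t : ℝ) : ℂ) from rfl, Complex.norm_real,
        Real.norm_eq_abs, abs_of_pos (by linarith)]
      linarith
    -- three pairwise bounds
    have pair : ∀ a ∈ closedBall z₀ δ, ∀ b ∈ closedBall z₀ δ, ∀ s : ℝ, 0 < s →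
        s ≤ δ → ‖a - b‖ = s → ‖(P a).coeff k + (P b).coeff k‖ ≤ 2 * C₀ * s := by
      intro a ha b hb s hs hsδ hab
      have hm := hmaster a ha b hb (by rw [hab]; exact hsδ)
      rw [hab] at hm
      have h5 : ‖(P a).coeff k + (P b).coeff k‖ * s ^ k ≤ (2 * C₀ * s) * s ^ k := by
        rw [pow_succ] at hm
        nlinarith [hm]
      exact le_of_mul_le_mul_right h5 (pow_pos hs k)
    have p1 := pair z₀ hz₀mem u humem t ht (by linarith)
      (by rw [show z₀ - u = -((t : ℝ) : ℂ) from by rw [hudef]; ring, norm_neg, hnt])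
    have p2 := pair z₀ hz₀mem v hvmem (2 * t) (by linarith) (by linarith)
      (by rw [show z₀ - v = -(((2 * t : ℝ)) : ℂ) from by rw [hvdef]; push_cast; ring, norm_neg,
            Complex.norm_real, Real.norm_eq_abs, abs_of_pos (by linarith)])
    have p3 := pair u humem v hvmem t ht (by linarith)
      (by rw [show u - v = -((t : ℝ) : ℂ) from by rw [hudef, hvdef]; push_cast; ring,
            norm_neg, hnt])
    have hdecomp : (2 : ℂ) * (P z₀).coeff k =
        ((P z₀).coeff k + (P u).coeff k) + ((P z₀).coeff k + (P v).coeff k) -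
          ((P u).coeff k + (P v).coeff k) := by ring
    calc ‖(2 : ℂ) * (P z₀).coeff k‖
        = ‖((P z₀).coeff k + (P u).coeff k) + ((P z₀).coeff k + (P v).coeff k) -
            ((P u).coeff k + (P v).coeff k)‖ := by rw [hdecomp]
      _ ≤ ‖((P z₀).coeff k + (P u).coeff k) + ((P z₀).coeff k + (P v).coeff k)‖ +
            ‖(P u).coeff k + (P v).coeff k‖ := norm_sub_le _ _
      _ ≤ ‖(P z₀).coeff k + (P u).coeff k‖ + ‖(P z₀).coeff k + (P v).coeff k‖ +
            ‖(P u).coeff k + (P v).coeff k‖ := by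
          have := norm_add_le ((P z₀).coeff k + (P u).coeff k)
            ((P z₀).coeff k + (P v).coeff k)
          linarith
      _ ≤ 2 * C₀ * t + 2 * C₀ * (2 * t) + 2 * C₀ * t := by linarith
      _ = 8 * C₀ * t := by ring
  -- conclude that the coefficient vanishes
  have hc0 : (P z₀).coeff k = 0 := by
    by_contra hne
    have hpos : 0 < ‖(2 : ℂ) * (P z₀).coeff k‖ := by
      rw [norm_pos_iff]
      exact mul_ne_zero two_ne_zero hne
    set c : ℝ := ‖(2 : ℂ) * (P z₀).coeff k‖ with hcdef
    set t : ℝ := min (δ / 2) (c / (16 * (C₀ + 1))) with htdef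
    have ht : 0 < t := lt_min (by linarith) (by positivity)
    have h1 := hsmall t ht (min_le_left _ _)
    have h2 : t ≤ c / (16 * (C₀ + 1)) := min_le_right _ _
    have h3 : 8 * C₀ * t ≤ 8 * (C₀ + 1) * t := by nlinarith
    have h4 : 8 * (C₀ + 1) * t ≤ 8 * (C₀ + 1) * (c / (16 * (C₀ + 1))) :=
      mul_le_mul_of_nonneg_left h2 (by linarith)
    have h5 : 8 * (C₀ + 1) * (c / (16 * (C₀ + 1))) = c / 2 := by
      field_simp
      ring
    linarith
  have hfin := hcoeff z₀ hz₀mem k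
  rw [hc0, mul_zero] at hfin
  exact hfin.symm
end

section
/- Let k be an even non-negative integer and let f : 𝔻² → ℂ be holomorphic and anti-symmetric, i.e., f(z₁, z₂) = −f(z₂, z₁) for all (z₁, z₂) ∈ 𝔻². If (∂₁^i f)(z, z) = 0 for all z ∈ 𝔻 and all 0 ≤ i ≤ k − 1 (a vacuous condition when k = 0), then (∂₁^k f)(z, z) = 0 for all z ∈ 𝔻. (The anti-symmetric analogue, used in Theorem 2.8(ii), showing S_k = {0} for even k when the Hilbert space consists of anti-symmetric functions.) -/
open Metric Set

lemma d1_iter_s13 (f : ℂ × ℂ → ℂ) (i : ℕ) (z w : ℂ) :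
    d1^[i] f (z, w) = iteratedDeriv i (fun u => f (u, w)) z := by
  induction i generalizing z w with
  | zero => simp
  | succ i ih =>
    rw [Function.iterate_succ_apply']
    show deriv (fun u => d1^[i] f (u, w)) z = _
    rw [iteratedDeriv_succ]
    congr 1
    funext u
    exact ih u w

lemma taylor_est (k : ℕ) (f : ℂ × ℂ → ℂ)
    (hf : DifferentiableOn ℂ f (ball (0 : ℂ) 1 ×ˢ ball (0 : ℂ) 1))
    (hvanish : ∀ i < k, ∀ z ∈ ball (0 : ℂ) 1, d1^[i] f (z, z) = 0)
    {a : ℂ} (ha : a ∈ ball (0 : ℂ) 1) :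
    ∃ r > 0, ∃ C : ℝ, 0 ≤ C ∧ (∀ t : ℂ, ‖t‖ ≤ r → a + t ∈ ball (0 : ℂ) 1) ∧
      ∀ b ∈ closedBall a r, ∀ s : ℂ, ‖s‖ ≤ r →
        ‖f (b + s, b) - (Nat.factorial k : ℂ)⁻¹ * d1^[k] f (b, b) * s ^ k‖ ≤ C * ‖s‖ ^ (k + 1) := by
  have ha1 : ‖a‖ < 1 := mem_ball_zero_iff.mp ha
  set r : ℝ := (1 - ‖a‖) / 4 with hrdef
  have hr : 0 < r := by unfold r; linarith
  have hmem : ∀ u : ℂ, ‖u - a‖ ≤ 3 * r → u ∈ ball (0 : ℂ) 1 := by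
    intro u hu
    rw [mem_ball_zero_iff]
    calc ‖u‖ ≤ ‖u - a‖ + ‖a‖ := by simpa using norm_add_le (u - a) a
    _ ≤ 3 * r + ‖a‖ := by linarith
    _ < 1 := by unfold r; linarith
  set K : Set (ℂ × ℂ) := closedBall a (3 * r) ×ˢ closedBall a r with hKdef
  have hK : IsCompact K := (isCompact_closedBall _ _).prod (isCompact_closedBall _ _)
  have hKΩ : K ⊆ ball (0 : ℂ) 1 ×ˢ ball (0 : ℂ) 1 := by
    rintro ⟨u, b⟩ ⟨hu, hb⟩
    refine ⟨hmem u ?_, hmem b ?_⟩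
    · simpa [dist_eq_norm] using hu
    · have : ‖b - a‖ ≤ r := by simpa [dist_eq_norm] using hb
      linarith
  obtain ⟨M0, hM0⟩ := hK.exists_bound_of_continuousOn (hf.continuousOn.mono hKΩ)
  set M : ℝ := max M0 0 with hMdef
  have hM : 0 ≤ M := le_max_right _ _
  have hMb : ∀ p ∈ K, ‖f p‖ ≤ M := fun p hp => (hM0 p hp).trans (le_max_left _ _)
  set Rnn : NNReal := ⟨2 * r, by positivity⟩ with hRdef
  have hRr : (Rnn : ℝ) = 2 * r := rfl
  have hR0 : (0 : ℝ) < Rnn := by rw [hRr]; linarith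
  refine ⟨r, hr, 2 * M / (Rnn : ℝ) ^ (k + 1), by positivity, ?_, ?_⟩
  · intro t ht
    apply hmem
    simpa using ht.trans (by linarith)
  intro b hb s hs
  have hba : ‖b - a‖ ≤ r := by simpa [dist_eq_norm] using hb
  have hbmem : b ∈ ball (0 : ℂ) 1 := hmem b (by linarith)
  set g : ℂ → ℂ := fun u => f (u, b) with hgdef
  have hsub : ∀ u : ℂ, u ∈ closedBall b (Rnn : ℝ) → (u, b) ∈ ball (0 : ℂ) 1 ×ˢ ball (0 : ℂ) 1 := by
    intro u hu
    have hub : ‖u - b‖ ≤ 2 * r := by rw [← hRr]; simpa [dist_eq_norm] using hu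
    refine ⟨hmem u ?_, hbmem⟩
    calc ‖u - a‖ ≤ ‖u - b‖ + ‖b - a‖ := by simpa using norm_add_le (u - b) (b - a)
    _ ≤ 3 * r := by linarith
  have hg : DifferentiableOn ℂ g (closedBall b (Rnn : ℝ)) := by
    apply hf.comp ((differentiable_id.prodMk (differentiable_const b)).differentiableOn)
    intro u hu
    exact hsub u hu
  have hps : HasFPowerSeriesOnBall g (cauchyPowerSeries g b Rnn) b Rnn :=
    hg.hasFPowerSeriesOnBall hR0
  set p := cauchyPowerSeries g b (Rnn : ℝ) with hpdef
  have hcK : ∀ θ : ℝ, (circleMap b (Rnn : ℝ) θ, b) ∈ K := by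
    intro θ
    have hc : dist (circleMap b (Rnn : ℝ) θ) b = (Rnn : ℝ) :=
      mem_sphere.mp (circleMap_mem_sphere b hR0.le θ)
    have hdba : dist b a ≤ r := mem_closedBall.mp hb
    have htri := dist_triangle (circleMap b (Rnn : ℝ) θ) b a
    refine ⟨mem_closedBall.mpr ?_, hb⟩
    linarith [hRr.le, hRr.ge]
  have hcont : Continuous fun θ : ℝ => g (circleMap b (Rnn : ℝ) θ) := by
    apply (hf.continuousOn.mono hKΩ).comp_continuous
      ((continuous_circleMap b (Rnn : ℝ)).prodMk continuous_const)
    intro θ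
    exact hcK θ
  have hcoeff : ∀ n, ‖p n‖ ≤ M / (Rnn : ℝ) ^ n := by
    intro n
    refine (norm_cauchyPowerSeries_le g b (Rnn : ℝ) n).trans ?_
    have hint : (∫ θ in (0 : ℝ)..(2 * Real.pi), ‖g (circleMap b (Rnn : ℝ) θ)‖) ≤
        ∫ _ in (0 : ℝ)..(2 * Real.pi), M := by
      apply intervalIntegral.integral_mono_on Real.two_pi_pos.le
        (hcont.norm.intervalIntegrable _ _) (intervalIntegrable_const)
      intro θ _
      exact hMb _ (hcK θ)
    have habs : |(Rnn : ℝ)| = (Rnn : ℝ) := abs_of_pos hR0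
    have hint2 : (∫ θ in (0 : ℝ)..(2 * Real.pi), ‖g (circleMap b (Rnn : ℝ) θ)‖) ≤
        (2 * Real.pi) * M := by
      refine hint.trans ?_
      rw [intervalIntegral.integral_const]
      simp
    calc ((2 * Real.pi)⁻¹ * ∫ θ in (0 : ℝ)..(2 * Real.pi), ‖g (circleMap b (Rnn : ℝ) θ)‖) *
          |(Rnn : ℝ)|⁻¹ ^ n
        ≤ ((2 * Real.pi)⁻¹ * ((2 * Real.pi) * M)) * |(Rnn : ℝ)|⁻¹ ^ n := by
          apply mul_le_mul_of_nonneg_right _ (by positivity)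
          exact mul_le_mul_of_nonneg_left hint2 (by positivity)
    _ = M / (Rnn : ℝ) ^ n := by
          rw [habs, inv_mul_cancel_left₀ Real.two_pi_pos.ne', inv_pow, div_eq_mul_inv]
  have hterm : ∀ n, p n (fun _ => s) = (Nat.factorial n : ℂ)⁻¹ * d1^[n] f (b, b) * s ^ n := by
    intro n
    have h1 := hps.factorial_smul s n
    have h2 : iteratedFDeriv ℂ n g b (fun _ => s) = s ^ n * iteratedDeriv n g b := by
      rw [iteratedDeriv_eq_iteratedFDeriv]
      have h3 := (iteratedFDeriv ℂ n g b).map_smul_univ (fun _ => s) (fun _ => 1)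
      simpa using h3
    have h4 : iteratedDeriv n g b = d1^[n] f (b, b) := (d1_iter_s13 f n b b).symm
    have hne : (Nat.factorial n : ℂ) ≠ 0 := by exact_mod_cast Nat.factorial_ne_zero n
    rw [nsmul_eq_mul, h2, h4] at h1
    apply mul_left_cancel₀ hne
    rw [h1]
    field_simp
  have hsmem : s ∈ EMetric.ball (0 : ℂ) Rnn := by
    rw [show EMetric.ball (0 : ℂ) Rnn = Metric.eball 0 Rnn from rfl, Metric.emetric_ball_nnreal]
    refine mem_ball_zero_iff.mpr (lt_of_le_of_lt hs ?_)
    rw [hRr]; linarith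
  have hsum0 : HasSum (fun n => p n fun _ => s) (g (b + s)) := hps.hasSum hsmem
  have hsum1 : HasSum (fun n => p (n + (k + 1)) fun _ => s)
      (g (b + s) - ∑ i ∈ Finset.range (k + 1), (p i fun _ => s)) :=
    (hasSum_nat_add_iff' (k + 1)).mpr hsum0
  have hsumTi : (∑ i ∈ Finset.range (k + 1), (p i fun _ => s)) =
      (Nat.factorial k : ℂ)⁻¹ * d1^[k] f (b, b) * s ^ k := by
    rw [Finset.sum_range_succ]
    have hz : (∑ i ∈ Finset.range k, (p i fun _ => s)) = 0 := by
      apply Finset.sum_eq_zero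
      intro i hi
      rw [hterm i, hvanish i (Finset.mem_range.mp hi) b hbmem]
      ring
    rw [hz, hterm k, zero_add]
  rw [hsumTi] at hsum1
  have hx0 : (0 : ℝ) ≤ ‖s‖ / (Rnn : ℝ) := by positivity
  have hxhalf : ‖s‖ / (Rnn : ℝ) ≤ 1 / 2 := by
    rw [div_le_iff₀ hR0]
    rw [hRr]; linarith
  have hx1 : ‖s‖ / (Rnn : ℝ) < 1 := lt_of_le_of_lt hxhalf (by norm_num)
  have hgeom : HasSum (fun n : ℕ => (M / (Rnn : ℝ) ^ (k + 1) * ‖s‖ ^ (k + 1)) * (‖s‖ / (Rnn : ℝ)) ^ n)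
      ((M / (Rnn : ℝ) ^ (k + 1) * ‖s‖ ^ (k + 1)) * (1 - ‖s‖ / (Rnn : ℝ))⁻¹) :=
    (hasSum_geometric_of_lt_one hx0 hx1).mul_left _
  have hbound : ∀ n : ℕ, ‖p (n + (k + 1)) fun _ => s‖ ≤
      (M / (Rnn : ℝ) ^ (k + 1) * ‖s‖ ^ (k + 1)) * (‖s‖ / (Rnn : ℝ)) ^ n := by
    intro n
    have h5 : ‖p (n + (k + 1)) fun _ => s‖ ≤ ‖p (n + (k + 1))‖ * ‖s‖ ^ (n + (k + 1)) := by
      have h7 := (p (n + (k + 1))).le_opNorm (fun _ => s)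
      simpa using h7
    refine h5.trans ?_
    have h6 : ‖p (n + (k + 1))‖ * ‖s‖ ^ (n + (k + 1)) ≤
        (M / (Rnn : ℝ) ^ (n + (k + 1))) * ‖s‖ ^ (n + (k + 1)) :=
      mul_le_mul_of_nonneg_right (hcoeff _) (by positivity)
    refine h6.trans (le_of_eq ?_)
    have hRne : (Rnn : ℝ) ≠ 0 := hR0.ne'
    field_simp
    have hRR : (Rnn : ℝ) ^ n * (Rnn : ℝ)⁻¹ ^ n = 1 := by rw [← mul_pow, mul_inv_cancel₀ hRne, one_pow]
    linear_combination (-(M * ‖s‖ * ‖s‖ ^ n * ‖s‖ ^ k * (Rnn : ℝ) * (Rnn : ℝ) ^ k)) * hRR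
  have hb1 := hsum1.norm_le_of_bounded hgeom hbound
  have hinv : (1 - ‖s‖ / (Rnn : ℝ))⁻¹ ≤ 2 := by
    have h8 : (1 : ℝ) / 2 ≤ 1 - ‖s‖ / (Rnn : ℝ) := by linarith
    calc (1 - ‖s‖ / (Rnn : ℝ))⁻¹ ≤ ((1 : ℝ) / 2)⁻¹ := by
          apply inv_anti₀ (by norm_num) h8
    _ = 2 := by norm_num
  refine hb1.trans ?_
  calc (M / (Rnn : ℝ) ^ (k + 1) * ‖s‖ ^ (k + 1)) * (1 - ‖s‖ / (Rnn : ℝ))⁻¹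
      ≤ (M / (Rnn : ℝ) ^ (k + 1) * ‖s‖ ^ (k + 1)) * 2 :=
        mul_le_mul_of_nonneg_left hinv (by positivity)
  _ = 2 * M / (Rnn : ℝ) ^ (k + 1) * ‖s‖ ^ (k + 1) := by ring

/-- anti-symmetric analogue used in Theorem 2.8(ii): for an anti-symmetric
holomorphic function on the bidisc and even `k ≥ 0`, if `∂₁^i f` vanishes on the diagonal
for all `0 ≤ i ≤ k − 1` (vacuous when `k = 0`), then so does `∂₁^k f`. -/
theorem stmt13 (k : ℕ) (hk : Even k) (f : ℂ × ℂ → ℂ)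
    (hf : DifferentiableOn ℂ f (ball (0 : ℂ) 1 ×ˢ ball (0 : ℂ) 1))
    (hanti : ∀ z₁ ∈ ball (0 : ℂ) 1, ∀ z₂ ∈ ball (0 : ℂ) 1, f (z₁, z₂) = -f (z₂, z₁))
    (hvanish : ∀ i < k, ∀ z ∈ ball (0 : ℂ) 1, d1^[i] f (z, z) = 0) :
    ∀ z ∈ ball (0 : ℂ) 1, d1^[k] f (z, z) = 0 := by
  intro a ha
  set al : ℂ → ℂ := fun b => (Nat.factorial k : ℂ)⁻¹ * d1^[k] f (b, b) with haldef
  have key : ∀ c ∈ ball (0 : ℂ) 1, ∃ r > 0, ∃ C : ℝ, 0 ≤ C ∧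
      (∀ t : ℂ, ‖t‖ ≤ r → c + t ∈ ball (0 : ℂ) 1) ∧
      ∀ t : ℂ, t ≠ 0 → ‖t‖ ≤ r → ‖al c + al (c + t)‖ ≤ C * ‖t‖ := by
    intro c hc
    obtain ⟨r, hr, C, hC, hball, hest⟩ := taylor_est k f hf hvanish hc
    refine ⟨r, hr, 2 * C, by positivity, hball, ?_⟩
    intro t ht htr
    have hcball : c ∈ closedBall c r := mem_closedBall_self hr.le
    have hctball : c + t ∈ closedBall c r := by
      rw [mem_closedBall]
      simpa [dist_eq_norm] using htr
    have E1 := hest c hcball t htr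
    have E2 := hest (c + t) hctball (-t) (by rwa [norm_neg])
    rw [add_neg_cancel_right, hk.neg_pow, norm_neg] at E2
    have hanti1 : f (c, c + t) = -f (c + t, c) := hanti c hc (c + t) (hball t htr)
    have hkey : (al c + al (c + t)) * t ^ k =
        -((f (c + t, c) - al c * t ^ k) + (f (c, c + t) - al (c + t) * t ^ k)) := by
      rw [hanti1]; ring
    have hnorm : ‖al c + al (c + t)‖ * ‖t‖ ^ k ≤ 2 * C * ‖t‖ * ‖t‖ ^ k := by
      calc ‖al c + al (c + t)‖ * ‖t‖ ^ k = ‖(al c + al (c + t)) * t ^ k‖ := by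
            rw [norm_mul, norm_pow]
      _ = ‖(f (c + t, c) - al c * t ^ k) + (f (c, c + t) - al (c + t) * t ^ k)‖ := by
            rw [hkey, norm_neg]
      _ ≤ ‖f (c + t, c) - al c * t ^ k‖ + ‖f (c, c + t) - al (c + t) * t ^ k‖ := norm_add_le _ _
      _ ≤ C * ‖t‖ ^ (k + 1) + C * ‖t‖ ^ (k + 1) := add_le_add E1 E2
      _ = 2 * C * ‖t‖ * ‖t‖ ^ k := by ring
    exact le_of_mul_le_mul_right hnorm (pow_pos (norm_pos_iff.mpr ht) k)
  obtain ⟨r, hr, C, hC, hball, hest⟩ := key a ha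
  have hmain : ∀ ε > 0, ‖(2 : ℂ) * al a‖ ≤ ε := by
    intro ε hε
    set δ : ℝ := min (r / 2) (ε / (16 * (C + 1))) with hδdef
    have hδ0 : 0 < δ := lt_min (by linarith) (by positivity)
    have hδr2 : δ ≤ r / 2 := min_le_left _ _
    have hδε : δ ≤ ε / (16 * (C + 1)) := min_le_right _ _
    set t : ℂ := (δ : ℂ) with htdef
    have htnorm : ‖t‖ = δ := by
      rw [htdef, Complex.norm_real]
      exact abs_of_pos hδ0
    have htne : t ≠ 0 := by
      rw [htdef]
      exact_mod_cast hδ0.ne'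
    have hbmem : a + t ∈ ball (0 : ℂ) 1 := hball t (by rw [htnorm]; linarith)
    obtain ⟨r', hr', C', hC', hball', hest'⟩ := key (a + t) hbmem
    set δ' : ℝ := min δ (min r' (ε / (8 * (C' + 1)))) with hδ'def
    have hδ'0 : 0 < δ' := lt_min hδ0 (lt_min hr' (by positivity))
    have hδ'δ : δ' ≤ δ := min_le_left _ _
    have hδ'r' : δ' ≤ r' := (min_le_right _ _).trans (min_le_left _ _)
    have hδ'ε : δ' ≤ ε / (8 * (C' + 1)) := (min_le_right _ _).trans (min_le_right _ _)
    set t' : ℂ := (δ' : ℂ) with ht'def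
    have ht'norm : ‖t'‖ = δ' := by
      rw [ht'def, Complex.norm_real]
      exact abs_of_pos hδ'0
    have ht'ne : t' ≠ 0 := by
      rw [ht'def]
      exact_mod_cast hδ'0.ne'
    have h1 : ‖al a + al (a + t)‖ ≤ C * δ := by
      have := hest t htne (by rw [htnorm]; linarith)
      rwa [htnorm] at this
    have h2 : ‖al (a + t) + al (a + t + t')‖ ≤ C' * δ' := by
      have := hest' t' ht'ne (by rw [ht'norm]; linarith)
      rwa [ht'norm] at this
    have htt'norm : ‖t + t'‖ = δ + δ' := by
      rw [htdef, ht'def]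
      rw [← Complex.ofReal_add, Complex.norm_real]
      exact abs_of_pos (by linarith)
    have h3 : ‖al a + al (a + t + t')‖ ≤ C * (δ + δ') := by
      have htt'ne : t + t' ≠ 0 := by
        rw [htdef, ht'def, ← Complex.ofReal_add]
        exact_mod_cast (by linarith : δ + δ' ≠ 0)
      have := hest (t + t') htt'ne (by rw [htt'norm]; linarith)
      rwa [htt'norm, ← add_assoc] at this
    have e1 : (C + 1) * δ ≤ ε / 16 := by
      calc (C + 1) * δ ≤ (C + 1) * (ε / (16 * (C + 1))) :=
            mul_le_mul_of_nonneg_left hδε (by linarith)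
      _ = ε / 16 := by field_simp
    have e2 : (C' + 1) * δ' ≤ ε / 8 := by
      calc (C' + 1) * δ' ≤ (C' + 1) * (ε / (8 * (C' + 1))) :=
            mul_le_mul_of_nonneg_left hδ'ε (by linarith)
      _ = ε / 8 := by field_simp
    have f1 : C * δ ≤ (C + 1) * δ := by nlinarith
    have f2 : C' * δ' ≤ (C' + 1) * δ' := by nlinarith
    have f3 : C * (δ + δ') ≤ 2 * ((C + 1) * δ) := by nlinarith
    calc ‖(2 : ℂ) * al a‖
        = ‖(al a + al (a + t)) - (al (a + t) + al (a + t + t')) + (al a + al (a + t + t'))‖ := by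
          congr 1; ring
    _ ≤ ‖(al a + al (a + t)) - (al (a + t) + al (a + t + t'))‖ + ‖al a + al (a + t + t')‖ :=
          norm_add_le _ _
    _ ≤ ‖al a + al (a + t)‖ + ‖al (a + t) + al (a + t + t')‖ + ‖al a + al (a + t + t')‖ := by
          have := norm_sub_le (al a + al (a + t)) (al (a + t) + al (a + t + t'))
          linarith
    _ ≤ C * δ + C' * δ' + C * (δ + δ') := by linarith
    _ ≤ ε := by linarith
  have h0 : ‖(2 : ℂ) * al a‖ ≤ 0 := by
    by_contra h
    push_neg at h
    have := hmain (‖(2 : ℂ) * al a‖ / 2) (by linarith)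
    linarith
  have h2al : (2 : ℂ) * al a = 0 := norm_le_zero_iff.mp h0
  have hal : al a = 0 := by
    have h2 : (2 : ℂ) ≠ 0 := two_ne_zero
    exact (mul_eq_zero.mp h2al).resolve_left h2
  have hfacne : (Nat.factorial k : ℂ) ≠ 0 := by exact_mod_cast Nat.factorial_ne_zero k
  have : (Nat.factorial k : ℂ)⁻¹ * d1^[k] f (a, a) = 0 := hal
  rcases mul_eq_zero.mp this with h | h
  · exact absurd h (inv_ne_zero hfacne)
  · exact h
end

section
/- Let n ≥ 2 and m ≥ 1 be integers, let φ : 𝔻 → 𝔻 be holomorphic, let c : 𝔻ⁿ → ℂ be holomorphic, and let f : 𝔻ⁿ → ℂ be holomorphic such that (∂₁^j f)(z₁, z₁, z₂, …, z_{n−1}) = 0 for all (z₁, …, z_{n−1}) ∈ 𝔻^{n−1} and all 0 ≤ j ≤ m − 1. Then for all (z₁, …, z_{n−1}) ∈ 𝔻^{n−1}, ∂₁^m ( z ↦ c(z) · f(φ(z₁), …, φ(z_n)) )(z₁, z₁, z₂, …, z_{n−1}) = c(z₁, z₁, z₂, …, z_{n−1}) · (φ'(z₁))^m · (∂₁^m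 f)(φ(z₁), φ(z₁), φ(z₂), …, φ(z_{n−1})). (The key computation in Proposition 2.13 identifying the cocycle c_{k_n}(φ, (z₁,…,z_{n−1})) = c(φ, (z₁, z₁, z₂,…,z_{n−1}))·(φ'(z₁))^{k_n}.) -/
open Metric Set

/-- The partial derivative with respect to the first variable of a function of `n + 2`
complex variables. -/
noncomputable def d1p (n : ℕ) (f : (Fin (n + 2) → ℂ) → ℂ) : (Fin (n + 2) → ℂ) → ℂ :=
  fun z => deriv (fun t => f (Function.update z 0 t)) (z 0)

/-- Iterates of `d1p` are just iterated one-variable derivatives along the first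
coordinate slice. -/
lemma d1p_iterate (n : ℕ) (j : ℕ) (F : (Fin (n + 2) → ℂ) → ℂ) (z : Fin (n + 2) → ℂ) :
    (d1p n)^[j] F z = deriv^[j] (fun t => F (Function.update z 0 t)) (z 0) := by
  induction j generalizing z with
  | zero => simp [Function.update_eq_self]
  | succ j ih =>
    rw [Function.iterate_succ_apply', Function.iterate_succ_apply']
    show deriv (fun t => (d1p n)^[j] F (Function.update z 0 t)) (z 0) = _
    have : (fun t => (d1p n)^[j] F (Function.update z 0 t))
        = fun t => deriv^[j] (fun s => F (Function.update z 0 s)) t := by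
      funext t
      rw [ih]
      simp [Function.update_idem]
    rw [this]

/-- One-variable engine: derivative of `a · (g ∘ φ)`. -/
lemma engine {φ a g : ℂ → ℂ}
    (hφmap : MapsTo φ (ball (0 : ℂ) 1) (ball (0 : ℂ) 1))
    (hφ : DifferentiableOn ℂ φ (ball (0 : ℂ) 1))
    (ha : DifferentiableOn ℂ a (ball (0 : ℂ) 1))
    (hg : DifferentiableOn ℂ g (ball (0 : ℂ) 1))
    {t : ℂ} (ht : t ∈ ball (0 : ℂ) 1) :
    HasDerivAt (fun s => a s * g (φ s))
      (deriv a t * g (φ t) + a t * (deriv g (φ t) * deriv φ t)) t := by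
  have hat : HasDerivAt a (deriv a t) t :=
    (ha.differentiableAt (isOpen_ball.mem_nhds ht)).hasDerivAt
  have hφt : HasDerivAt φ (deriv φ t) t :=
    (hφ.differentiableAt (isOpen_ball.mem_nhds ht)).hasDerivAt
  have hgt : HasDerivAt g (deriv g (φ t)) (φ t) :=
    (hg.differentiableAt (isOpen_ball.mem_nhds (hφmap ht))).hasDerivAt
  exact hat.mul (hgt.comp t hφt)

/-- Core one-variable computation: iterated derivatives of `u · (h ∘ φ)` expand as
holomorphic-coefficient combinations of iterated derivatives of `h` at `φ t`, with
leading coefficient `u · (φ')^j`. -/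
lemma core {φ u h : ℂ → ℂ}
    (hφmap : MapsTo φ (ball (0 : ℂ) 1) (ball (0 : ℂ) 1))
    (hφ : DifferentiableOn ℂ φ (ball (0 : ℂ) 1))
    (hu : DifferentiableOn ℂ u (ball (0 : ℂ) 1))
    (hh : DifferentiableOn ℂ h (ball (0 : ℂ) 1)) (j : ℕ) :
    ∃ a : ℕ → ℂ → ℂ,
      (∀ i, DifferentiableOn ℂ (a i) (ball (0 : ℂ) 1)) ∧
      (∀ i, j < i → a i = fun _ => 0) ∧
      (∀ t ∈ ball (0 : ℂ) 1, a j t = u t * deriv φ t ^ j) ∧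
      (∀ t ∈ ball (0 : ℂ) 1, deriv^[j] (fun s => u s * h (φ s)) t
        = ∑ i ∈ Finset.range (j + 1), a i t * deriv^[i] h (φ t)) := by
  have hhi : ∀ i, DifferentiableOn ℂ (deriv^[i] h) (ball (0 : ℂ) 1) := fun i =>
    ((hh.analyticOnNhd isOpen_ball).iterated_deriv i).differentiableOn
  have hφ' : DifferentiableOn ℂ (deriv φ) (ball (0 : ℂ) 1) :=
    ((hφ.analyticOnNhd isOpen_ball).deriv).differentiableOn
  induction j with
  | zero =>
    refine ⟨fun i => if i = 0 then u else fun _ => 0, ?_, ?_, ?_, ?_⟩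
    · intro i
      by_cases hi : i = 0 <;> simp [hi, hu, differentiableOn_const]
    · intro i hi
      have : i ≠ 0 := by omega
      simp [this]
    · intro t _; simp
    · intro t _; simp
  | succ j ih =>
    obtain ⟨a, hadiff, hazero, hatop, haeq⟩ := ih
    refine ⟨fun i t => deriv (a i) t + (if i = 0 then 0 else a (i - 1) t * deriv φ t),
      ?_, ?_, ?_, ?_⟩
    · intro i
      by_cases hi : i = 0
      · simp only [hi, if_true, add_zero]
        exact (((hadiff 0).analyticOnNhd isOpen_ball).deriv).differentiableOn
      · simp only [hi, if_false]
        exact ((((hadiff i).analyticOnNhd isOpen_ball).deriv).differentiableOn).add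
          ((hadiff (i - 1)).mul hφ')
    · intro i hi
      have h1 : a i = fun _ => 0 := hazero i (by omega)
      have h2 : a (i - 1) = fun _ => 0 := hazero (i - 1) (by omega)
      funext t
      have h3 : i ≠ 0 := by omega
      simp [h1, h2, h3]
    · intro t ht
      have h1 : a (j + 1) = fun _ => 0 := hazero (j + 1) (by omega)
      simp [h1, hatop t ht, pow_succ, mul_assoc]
    · intro t ht
      rw [Function.iterate_succ_apply']
      have hcongr : deriv (deriv^[j] (fun s => u s * h (φ s))) t
          = deriv (fun s => ∑ i ∈ Finset.range (j + 1), a i s * deriv^[i] h (φ s)) t := by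
        apply Filter.EventuallyEq.deriv_eq
        filter_upwards [isOpen_ball.mem_nhds ht] with s hs
        exact haeq s hs
      rw [hcongr]
      have hsum : HasDerivAt (fun s => ∑ i ∈ Finset.range (j + 1), a i s * deriv^[i] h (φ s))
          (∑ i ∈ Finset.range (j + 1),
            (deriv (a i) t * deriv^[i] h (φ t)
              + a i t * (deriv^[i + 1] h (φ t) * deriv φ t))) t := by
        apply HasDerivAt.fun_sum
        intro i _
        have := engine hφmap hφ (hadiff i) (hhi i) ht
        rwa [← Function.iterate_succ_apply' deriv i h] at this
      rw [hsum.deriv]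
      have h1 : a (j + 1) = fun _ => 0 := hazero (j + 1) (by omega)
      have e1 : ∑ i ∈ Finset.range (j + 1 + 1),
          ((fun i t => deriv (a i) t + if i = 0 then 0 else a (i - 1) t * deriv φ t) i t)
            * deriv^[i] h (φ t)
          = ∑ i ∈ Finset.range (j + 1),
              (deriv (a i) t * deriv^[i] h (φ t)
                + a i t * (deriv^[i + 1] h (φ t) * deriv φ t)) := by
        have s1 : ∑ i ∈ Finset.range (j + 1 + 1),
            ((fun i t => deriv (a i) t + if i = 0 then 0 else a (i - 1) t * deriv φ t) i t)
              * deriv^[i] h (φ t)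
            = ∑ i ∈ Finset.range (j + 1 + 1), deriv (a i) t * deriv^[i] h (φ t)
              + ∑ i ∈ Finset.range (j + 1 + 1),
                (if i = 0 then 0 else a (i - 1) t * deriv φ t) * deriv^[i] h (φ t) := by
          rw [← Finset.sum_add_distrib]
          exact Finset.sum_congr rfl fun i _ => by ring
        rw [s1, Finset.sum_range_succ (fun i => deriv (a i) t * deriv^[i] h (φ t)),
          Finset.sum_range_succ' (fun i =>
            (if i = 0 then 0 else a (i - 1) t * deriv φ t) * deriv^[i] h (φ t))]
        simp only [h1, deriv_const', zero_mul, add_zero, Nat.succ_ne_zero, if_false,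
          Nat.add_sub_cancel, if_true, reduceIte]
        rw [← Finset.sum_add_distrib]
        exact Finset.sum_congr rfl fun i _ => by ring
      rw [e1]


lemma slice_diff (n : ℕ) (F : (Fin (n + 2) → ℂ) → ℂ)
    (hF : DifferentiableOn ℂ F (Set.univ.pi fun _ : Fin (n + 2) => ball (0 : ℂ) 1))
    (p : Fin (n + 2) → ℂ) (hp : ∀ l, p l ∈ ball (0 : ℂ) 1) :
    DifferentiableOn ℂ (fun t => F (Function.update p 0 t)) (ball (0 : ℂ) 1) := by
  have hupd : Differentiable ℂ (fun t : ℂ => Function.update p 0 t) := by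
    rw [differentiable_pi]
    intro l
    by_cases hl : l = 0
    · subst hl; simpa [Function.update_self] using differentiable_id (𝕜 := ℂ) (E := ℂ)
    · simp only [Function.update_of_ne hl]; exact differentiable_const _
  refine hF.comp hupd.differentiableOn ?_
  intro t ht
  rw [Set.mem_univ_pi]
  intro l
  by_cases hl : l = 0
  · subst hl; simpa using ht
  · simpa [Function.update_of_ne hl] using hp l

/-- the key computation in Proposition 2.13: on the polydisc `𝔻ⁿ` (here
`n + 2 ≥ 2` variables), if the first `m − 1` partial derivatives `∂₁^j f` vanish on
`Δ_n = {(z₁, z₁, z₂, …, z_{n−1})}`, then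
`∂₁^m (z ↦ c(z)·f(φ(z₁),…,φ(z_n)))` at a point of `Δ_n` equals
`c(z₁, z₁, z₂, …, z_{n−1}) · (φ'(z₁))^m · (∂₁^m f)(φ(z₁), φ(z₁), φ(z₂), …, φ(z_{n−1}))`. -/
theorem stmt15 (n m : ℕ) (hm : 1 ≤ m) (φ : ℂ → ℂ) (c f : (Fin (n + 2) → ℂ) → ℂ)
    (hφmap : MapsTo φ (ball (0 : ℂ) 1) (ball (0 : ℂ) 1))
    (hφ : DifferentiableOn ℂ φ (ball (0 : ℂ) 1))
    (hc : DifferentiableOn ℂ c (Set.univ.pi fun _ : Fin (n + 2) => ball (0 : ℂ) 1))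
    (hf : DifferentiableOn ℂ f (Set.univ.pi fun _ : Fin (n + 2) => ball (0 : ℂ) 1))
    (hvanish : ∀ j < m, ∀ ζ : Fin (n + 1) → ℂ, (∀ l, ζ l ∈ ball (0 : ℂ) 1) →
      (d1p n)^[j] f (Fin.cons (ζ 0) ζ) = 0) :
    ∀ ζ : Fin (n + 1) → ℂ, (∀ l, ζ l ∈ ball (0 : ℂ) 1) →
      (d1p n)^[m] (fun z => c z * f (fun l => φ (z l))) (Fin.cons (ζ 0) ζ)
        = c (Fin.cons (ζ 0) ζ) * (deriv φ (ζ 0)) ^ m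
            * (d1p n)^[m] f (Fin.cons (φ (ζ 0)) fun l => φ (ζ l))   := by
  intro ζ hζ
  set z : Fin (n + 2) → ℂ := Fin.cons (ζ 0) ζ with hzdef
  have hzball : ∀ l, z l ∈ ball (0 : ℂ) 1 := by
    intro l
    refine Fin.cases ?_ ?_ l
    · simpa [hzdef] using hζ 0
    · intro i; simpa [hzdef] using hζ i
  have hz0 : z 0 = ζ 0 := by simp [hzdef]
  set w : Fin (n + 2) → ℂ := fun l => φ (z l) with hwdef
  have hw : w = Fin.cons (φ (ζ 0)) (fun l => φ (ζ l)) := by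
    funext l
    refine Fin.cases ?_ ?_ l
    · simp [hwdef, hzdef]
    · intro i; simp [hwdef, hzdef]
  have hwball : ∀ l, w l ∈ ball (0 : ℂ) 1 := fun l => hφmap (hzball l)
  set u : ℂ → ℂ := fun t => c (Function.update z 0 t) with hudef
  set h : ℂ → ℂ := fun s => f (Function.update w 0 s) with hhdef
  have hu : DifferentiableOn ℂ u (ball (0 : ℂ) 1) := slice_diff n c hc z hzball
  have hh : DifferentiableOn ℂ h (ball (0 : ℂ) 1) := slice_diff n f hf w hwball
  -- the slice of the product function
  have hslice : (fun t => c (Function.update z 0 t)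
        * f (fun l => φ (Function.update z 0 t l)))
      = fun t => u t * h (φ t) := by
    funext t
    congr 1
    rw [hhdef]
    congr 1
    funext l
    by_cases hl : l = 0
    · subst hl; simp [hwdef]
    · simp [Function.update_of_ne hl, hwdef]
  -- rewrite the LHS using the one-variable reduction
  rw [d1p_iterate]
  rw [hslice, hz0]
  -- the iterated derivatives of `h` at `φ (ζ 0)` are the `d1p` iterates of `f`
  have hder : ∀ i : ℕ, deriv^[i] h (φ (ζ 0))
      = (d1p n)^[i] f (Fin.cons (φ (ζ 0)) fun l => φ (ζ l)) := by
    intro i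
    rw [← hw, d1p_iterate n i f w]
    have hw0 : w 0 = φ (ζ 0) := by rw [hw]; simp
    rw [hw0, hhdef]
  have hvan : ∀ i < m, deriv^[i] h (φ (ζ 0)) = 0 := by
    intro i hi
    rw [hder i]
    have := hvanish i hi (fun l => φ (ζ l)) (fun l => hφmap (hζ l))
    simpa using this
  obtain ⟨a, hadiff, hazero, hatop, haeq⟩ := core hφmap hφ hu hh m
  rw [haeq (ζ 0) (hζ 0), Finset.sum_range_succ]
  have hrest : ∑ i ∈ Finset.range m, a i (ζ 0) * deriv^[i] h (φ (ζ 0)) = 0 := by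
    refine Finset.sum_eq_zero fun i hi => ?_
    rw [hvan i (Finset.mem_range.mp hi), mul_zero]
  rw [hrest, zero_add, hatop (ζ 0) (hζ 0), hder m]
  have huz : u (ζ 0) = c z := by
    rw [hudef]
    simp only []
    rw [← hz0, Function.update_eq_self]
  rw [huz, mul_assoc]
end

section
/- Let n ≥ 0 be an integer and let f : 𝔻² → ℂ be holomorphic with (∂₁^i f)(z, z) = 0 for all z ∈ 𝔻 and all 0 ≤ i ≤ n. Then for j = 1, 2 the holomorphic function (z₁, z₂) ↦ z_j · f(z₁, z₂) also satisfies (∂₁^i (z_j · f))(z, z) = 0 for all z ∈ 𝔻 and all 0 ≤ i ≤ n. (Lemma 3.3: each M_n is invariant under the multiplication operators M_{z₁} and M_{z₂}.) -/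
open Metric Set

/-- Iterated `d1` is just the iterated one-variable derivative of the slice. -/
lemma d1_iterate_eq (F : ℂ × ℂ → ℂ) :
    ∀ i, ∀ z w : ℂ, d1^[i] F (z, w) = deriv^[i] (fun ζ => F (ζ, w)) z := by
  intro i
  induction i with
  | zero => intro z w; simp
  | succ k ih =>
    intro z w
    rw [Function.iterate_succ_apply', Function.iterate_succ_apply']
    show deriv (fun ζ => d1^[k] F (ζ, w)) z = _
    have h : (fun ζ => d1^[k] F (ζ, w)) = fun ζ => deriv^[k] (fun ζ' => F (ζ', w)) ζ :=
      funext fun ζ => ih ζ w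
    rw [h]

/-- Iterated derivatives of a holomorphic function on the unit disc are
differentiable on the disc. -/
lemma iter_deriv_diffOn {g : ℂ → ℂ} (hg : DifferentiableOn ℂ g (ball (0 : ℂ) 1)) :
    ∀ i, DifferentiableOn ℂ (deriv^[i] g) (ball (0 : ℂ) 1) := by
  intro i
  induction i with
  | zero => exact hg
  | succ k ih =>
    rw [Function.iterate_succ_apply']
    exact ((ih.analyticOnNhd isOpen_ball).deriv).differentiableOn

lemma iter_deriv_const_mul {g : ℂ → ℂ} (hg : DifferentiableOn ℂ g (ball (0 : ℂ) 1))
    (c : ℂ) : ∀ i, ∀ z ∈ ball (0 : ℂ) 1,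
      deriv^[i] (fun ζ => c * g ζ) z = c * deriv^[i] g z := by
  intro i
  induction i with
  | zero => intro z _; rfl
  | succ k ih =>
    intro z hz
    rw [Function.iterate_succ_apply', Function.iterate_succ_apply']
    have h1 : deriv^[k] (fun ζ => c * g ζ) =ᶠ[nhds z] fun ζ => c * deriv^[k] g ζ :=
      Filter.eventuallyEq_of_mem (isOpen_ball.mem_nhds hz) (fun ζ hζ => ih ζ hζ)
    rw [h1.deriv_eq]
    exact deriv_const_mul c ((iter_deriv_diffOn hg k).differentiableAt
      (isOpen_ball.mem_nhds hz))

lemma iter_deriv_id_mul {g : ℂ → ℂ} (hg : DifferentiableOn ℂ g (ball (0 : ℂ) 1)) :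
    ∀ i, ∀ z ∈ ball (0 : ℂ) 1,
      deriv^[i] (fun ζ => ζ * g ζ) z
        = (i : ℂ) * deriv^[i - 1] g z + z * deriv^[i] g z := by
  intro i
  induction i with
  | zero => intro z _; simp
  | succ k ih =>
    intro z hz
    rw [Function.iterate_succ_apply']
    have h1 : deriv^[k] (fun ζ => ζ * g ζ) =ᶠ[nhds z]
        fun ζ => (k : ℂ) * deriv^[k - 1] g ζ + ζ * deriv^[k] g ζ :=
      Filter.eventuallyEq_of_mem (isOpen_ball.mem_nhds hz) (fun ζ hζ => ih ζ hζ)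
    rw [h1.deriv_eq]
    have hA : HasDerivAt (deriv^[k - 1] g) (deriv (deriv^[k - 1] g) z) z :=
      ((iter_deriv_diffOn hg (k - 1)).differentiableAt (isOpen_ball.mem_nhds hz)).hasDerivAt
    have hB : HasDerivAt (deriv^[k] g) (deriv (deriv^[k] g) z) z :=
      ((iter_deriv_diffOn hg k).differentiableAt (isOpen_ball.mem_nhds hz)).hasDerivAt
    have h2 : HasDerivAt (fun ζ => (k : ℂ) * deriv^[k - 1] g ζ + ζ * deriv^[k] g ζ)
        ((k : ℂ) * deriv (deriv^[k - 1] g) z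
          + (1 * deriv^[k] g z + z * deriv (deriv^[k] g) z)) z :=
      (hA.const_mul _).add ((hasDerivAt_id z).mul hB)
    rw [h2.deriv]
    have h3 : (k : ℂ) * deriv (deriv^[k - 1] g) z = (k : ℂ) * deriv^[k] g z := by
      cases k with
      | zero => simp
      | succ m =>
        rw [Nat.succ_sub_one, Function.iterate_succ_apply' deriv m g]
    have h4 : deriv (deriv^[k] g) z = deriv^[k + 1] g z :=
      (Function.iterate_succ_apply' deriv k g).symm ▸ rfl
    rw [h3, h4]
    have h5 : (k + 1 : ℕ) - 1 = k := rfl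
    rw [h5]
    push_cast
    ring

/-- Lemma 3.3: if the first `n` partial derivatives `∂₁^i f` of a holomorphic
function on the bidisc vanish on the diagonal, the same holds for `z₁·f` and `z₂·f`;
that is, each `M_n` is invariant under the multiplication operators `M_{z₁}` and `M_{z₂}`. -/
theorem stmt16 (n : ℕ) (f : ℂ × ℂ → ℂ)
    (hf : DifferentiableOn ℂ f (ball (0 : ℂ) 1 ×ˢ ball (0 : ℂ) 1))
    (hvanish : ∀ i ≤ n, ∀ z ∈ ball (0 : ℂ) 1, d1^[i] f (z, z) = 0) :
    ∀ i ≤ n, ∀ z ∈ ball (0 : ℂ) 1,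
      d1^[i] (fun p => p.1 * f p) (z, z) = 0 ∧
      d1^[i] (fun p => p.2 * f p) (z, z) = 0 := by
  intro i hi z hz
  set g : ℂ → ℂ := fun ζ => f (ζ, z) with hgdef
  have hg : DifferentiableOn ℂ g (ball (0 : ℂ) 1) := by
    apply hf.comp ((differentiable_id.prodMk (differentiable_const z)).differentiableOn)
    intro ζ hζ
    exact ⟨hζ, hz⟩
  have hvan : ∀ k ≤ n, deriv^[k] g z = 0 := by
    intro k hk
    have := hvanish k hk z hz
    rwa [d1_iterate_eq f k z z] at this
  constructor
  · have h1 := d1_iterate_eq (fun p => p.1 * f p) i z z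
    have h2 : (fun ζ => (fun p : ℂ × ℂ => p.1 * f p) (ζ, z)) = fun ζ => ζ * g ζ := rfl
    rw [h1, h2, iter_deriv_id_mul hg i z hz, hvan i hi,
      hvan (i - 1) (le_trans (Nat.sub_le i 1) hi)]
    ring
  · have h1 := d1_iterate_eq (fun p => p.2 * f p) i z z
    have h2 : (fun ζ => (fun p : ℂ × ℂ => p.2 * f p) (ζ, z)) = fun ζ => z * g ζ := rfl
    rw [h1, h2, iter_deriv_const_mul hg z i z hz, hvan i hi]
    ring
end
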